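/- arXiv:2107.06121 — 5 statements merged into one kernel-verified Lean document; each statement's English description precedes it below -/
import Mathlib

section
/- (Lemma 3.1(a), Bernstein–Goodman) A hypergraph H is acyclic if and only if the weight w(H) of H is equal to the weight of a maximum-weight spanning forest of the weighted hyperedge graph wg(H). -/
/-!
Lemma 3.1(a) (Bernstein–Goodman): a hypergraph `H` is acyclic iff the weight `w(H)`
equals the weight of a maximum-weight spanning forest of the weighted hyperedge
graph `wg(H)`.

A hypergraph on a finite vertex type `V` is given by its finite set `E` of
hyperedges, each a `Finset V`.
-/

variable {V : Type*} [Fintype V] [DecidableEq V]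

/-- The degree of a vertex `v`: the number of hyperedges containing `v`. -/
def hdeg (E : Finset (Finset V)) (v : V) : ℕ := (E.filter (fun e => v ∈ e)).card

/-- The weight of a hypergraph: the sum, over non-isolated vertices, of (degree − 1). -/
def hweight (E : Finset (Finset V)) : ℕ :=
  ∑ v ∈ Finset.univ.filter (fun v => 1 ≤ hdeg E v), (hdeg E v - 1)

/-- The weighted hyperedge graph `wg(H)`: nodes are the hyperedges, two distinct
hyperedges are adjacent iff they intersect.  (The weight of an edge `(e, f)` is
`(e ∩ f).card`, see `fweight`.) -/
def wg (E : Finset (Finset V)) : SimpleGraph (Finset V) where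
  Adj e f := e ∈ E ∧ f ∈ E ∧ e ≠ f ∧ (e ∩ f).Nonempty
  symm := ⟨fun e f ⟨he, hf, hne, hi⟩ => ⟨hf, he, hne.symm, by rwa [Finset.inter_comm] at hi⟩⟩
  loopless := ⟨fun e h => h.2.2.1 rfl⟩

/-- The weight `|e ∩ f|` of an (unordered) pair of hyperedges. -/
def interWt : Sym2 (Finset V) → ℕ :=
  Sym2.lift ⟨fun a b => (a ∩ b).card, fun a b => by simp [Finset.inter_comm]⟩

/-- The weight of a forest (or any graph) on hyperedges: the sum over its edges
of the size of the intersection of the two endpoints. -/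
noncomputable def fweight (F : SimpleGraph (Finset V)) : ℕ :=
  ∑ p ∈ (Set.toFinite F.edgeSet).toFinset, interWt p

/-- `S` is a spanning forest of `G`: an acyclic subgraph with the same connected
components (in particular it contains all nodes of `G`). -/
def IsSpanningForest (G S : SimpleGraph (Finset V)) : Prop :=
  S ≤ G ∧ S.IsAcyclic ∧ ∀ a b, S.Reachable a b ↔ G.Reachable a b

/-- `S` is a maximum-weight spanning forest of `G`. -/
def IsMaxSpanningForest (G S : SimpleGraph (Finset V)) : Prop :=
  IsSpanningForest G S ∧ ∀ S', IsSpanningForest G S' → fweight S' ≤ fweight S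

/-- A forest whose node set is the set of hyperedges of the hypergraph `E`. -/
def IsForestOn (E : Finset (Finset V)) (F : SimpleGraph (Finset V)) : Prop :=
  F.IsAcyclic ∧ ∀ e f, F.Adj e f → e ∈ E ∧ f ∈ E

/-- A join forest of the hypergraph `E`: a forest on the hyperedges such that any
two hyperedges sharing a vertex `v` are connected, and every node on the (unique)
path between them contains `v`. -/
def IsJoinForest (E : Finset (Finset V)) (J : SimpleGraph (Finset V)) : Prop :=
  IsForestOn E J ∧
  ∀ e ∈ E, ∀ f ∈ E, ∀ v ∈ e, v ∈ f →
    J.Reachable e f ∧ ∀ p : J.Walk e f, p.IsPath → ∀ g ∈ p.support, v ∈ g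

/-- A hypergraph is acyclic iff it has a join forest. -/
def IsAcyclicHypergraph (E : Finset (Finset V)) : Prop := ∃ J, IsJoinForest E J

set_option linter.unusedSectionVars false

open SimpleGraph

section Counting
variable {W : Type*} [Fintype W] [DecidableEq W]

noncomputable def eCard (G : SimpleGraph W) : ℕ := (Set.toFinite G.edgeSet).toFinset.card

lemma walk_support_prop {G : SimpleGraph W} {P : W → Prop}
    (hE : ∀ x y, G.Adj x y → P x ∧ P y) {b c : W} (p : G.Walk b c) (hb : P b) :
    ∀ x ∈ p.support, P x := by
  induction p with
  | nil => simpa using hb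
  | cons h q ih =>
    intro x hx
    rw [SimpleGraph.Walk.support_cons] at hx
    rcases List.mem_cons.1 hx with rfl | hx
    · exact hb
    · exact ih (hE _ _ h).2 x hx

lemma acyclic_mono {G H : SimpleGraph W} (h : G ≤ H) (hH : H.IsAcyclic) : G.IsAcyclic := by
  intro v c hc
  exact hH (c.transfer H (fun e he => (SimpleGraph.edgeSet_mono h) (c.edges_subset_edgeSet he)))
    (hc.transfer _)

lemma walk_edge_endpoints {G : SimpleGraph W} {x y : W} (p : G.Walk x y) {e} (he : e ∈ p.edges) :
    ∃ u v, e = s(u, v) ∧ G.Adj u v ∧ u ∈ p.support ∧ v ∈ p.support := by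
  induction e using Sym2.ind with
  | _ u v =>
    exact ⟨u, v, rfl, p.edges_subset_edgeSet he,
      SimpleGraph.Walk.fst_mem_support_of_mem_edges p he,
      SimpleGraph.Walk.snd_mem_support_of_mem_edges p he⟩

lemma transfer_reach {G G' : SimpleGraph W} {x y : W} (p : G.Walk x y)
    (h : ∀ u v, G.Adj u v → u ∈ p.support → v ∈ p.support → G'.Adj u v) : G'.Reachable x y := by
  refine ⟨p.transfer G' ?_⟩
  intro e he
  obtain ⟨u, v, rfl, hadj, hu, hv⟩ := walk_edge_endpoints p he
  exact (h u v hadj hu hv)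

lemma reachable_induce {G : SimpleGraph W} {s : Set W} {b c : W} (p : G.Walk b c)
    (hp : ∀ x ∈ p.support, x ∈ s) (hb : b ∈ s) (hc : c ∈ s) :
    (G.induce s).Reachable ⟨b, hb⟩ ⟨c, hc⟩ := by
  induction p with
  | nil => exact SimpleGraph.Reachable.refl _
  | @cons b x cc h q ih =>
    have hx : x ∈ s := hp x (by simp)
    refine SimpleGraph.Reachable.trans (SimpleGraph.Adj.reachable (v := (⟨x, hx⟩ : s)) ?_)
      (ih (fun z hz => hp z (by simp [hz])) hx hc)
    exact h

/-- A connected acyclic graph whose edges lie inside `A` has `|A| - 1` edges. -/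
lemma tree_count {G : SimpleGraph W} (hG : G.IsAcyclic) (A : Finset W)
    (hE : ∀ x y, G.Adj x y → x ∈ A ∧ y ∈ A) (hA : A.Nonempty)
    (hconn : ∀ a ∈ A, ∀ b ∈ A, G.Reachable a b) :
    eCard G + 1 = A.card := by
  classical
  set s : Set W := ↑A with hs
  let Gi := G.induce s
  haveI : Fintype Gi.edgeSet := (Set.toFinite _).fintype
  have hemb : ∀ (u v : s), Gi.Adj u v ↔ G.Adj u.1 v.1 := fun u v => Iff.rfl
  -- Gi is a tree
  haveI : Nonempty s := ⟨⟨hA.choose, by simpa [hs] using hA.choose_spec⟩⟩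
  have hconn' : Gi.Connected := by
    refine ⟨?_⟩
    rintro ⟨a, ha⟩ ⟨b, hb⟩
    obtain ⟨p⟩ := hconn a (by simpa [hs] using ha) b (by simpa [hs] using hb)
    exact reachable_induce p
      (walk_support_prop (fun x y hxy => by
        obtain ⟨h1, h2⟩ := hE x y hxy
        exact ⟨by simpa [hs] using h1, by simpa [hs] using h2⟩) p ha) ha hb
  have hac : Gi.IsAcyclic := by
    intro v c hc
    have := hG (c.map (SimpleGraph.Embedding.comap (Function.Embedding.subtype s) G).toHom)
    exact this (hc.map Subtype.val_injective)
  have htree : Gi.IsTree := ⟨hconn', hac⟩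
  have hcard := htree.card_edgeFinset
  have hcards : Fintype.card s = A.card := by
    simpa [hs] using Fintype.card_coe A
  rw [hcards] at hcard
  rw [← hcard]
  congr 1
  -- eCard G = Gi.edgeFinset.card
  refine (Finset.card_bij (fun p _ => Sym2.map Subtype.val p) ?_ ?_ ?_).symm
  · intro p hp
    induction p using Sym2.ind with
    | _ u v =>
      rw [SimpleGraph.mem_edgeFinset] at hp
      simpa [Set.Finite.mem_toFinset] using (hemb u v).1 hp
  · intro p hp q hq h
    exact Sym2.map.injective Subtype.val_injective h
  · intro e he
    rw [Set.Finite.mem_toFinset] at he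
    induction e using Sym2.ind with
    | _ u v =>
      have hadj : G.Adj u v := he
      obtain ⟨hu, hv⟩ := hE u v hadj
      refine ⟨s((⟨u, by simpa [hs] using hu⟩ : s), (⟨v, by simpa [hs] using hv⟩ : s)), ?_, rfl⟩
      rw [SimpleGraph.mem_edgeFinset]
      exact hadj


lemma eCard_eq_zero {G : SimpleGraph W} (h : ∀ x y, ¬ G.Adj x y) : eCard G = 0 := by
  rw [eCard, Finset.card_eq_zero]
  ext p
  simp only [Set.Finite.mem_toFinset, Finset.notMem_empty, iff_false]
  induction p using Sym2.ind with
  | _ x y => exact h x y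

lemma forest_split {G : SimpleGraph W} (hG : G.IsAcyclic) {A : Finset W}
    (hE : ∀ x y, G.Adj x y → x ∈ A ∧ y ∈ A) {a : W} (ha : a ∈ A) :
    ∃ B : Finset W, a ∈ B ∧ B ⊆ A ∧ (∀ b ∈ B, G.Reachable a b) ∧
      ∃ G₂ : SimpleGraph W, G₂.IsAcyclic ∧ (∀ x y, G₂.Adj x y → x ∈ A \ B ∧ y ∈ A \ B) ∧
        eCard G + 1 = B.card + eCard G₂ := by
  classical
  set B : Finset W := A.filter (fun x => G.Reachable a x) with hB
  have haB : a ∈ B := Finset.mem_filter.2 ⟨ha, Reachable.refl a⟩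
  have hBA : B ⊆ A := Finset.filter_subset _ _
  have hmemB : ∀ x, x ∈ B ↔ (x ∈ A ∧ G.Reachable a x) := fun x => Finset.mem_filter
  have hcl : ∀ x y, G.Adj x y → (x ∈ B ↔ y ∈ B) := by
    intro x y hxy
    rw [hmemB, hmemB]
    constructor
    · rintro ⟨_, hr⟩; exact ⟨(hE x y hxy).2, hr.trans hxy.reachable⟩
    · rintro ⟨_, hr⟩; exact ⟨(hE x y hxy).1, hr.trans hxy.symm.reachable⟩
  let G₁ : SimpleGraph W :=
    { Adj := fun x y => G.Adj x y ∧ x ∈ B ∧ y ∈ B,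
      symm := ⟨fun x y ⟨h, hx, hy⟩ => ⟨h.symm, hy, hx⟩⟩,
      loopless := ⟨fun x h => G.loopless.irrefl x h.1⟩ }
  let G₂ : SimpleGraph W :=
    { Adj := fun x y => G.Adj x y ∧ x ∉ B ∧ y ∉ B,
      symm := ⟨fun x y ⟨h, hx, hy⟩ => ⟨h.symm, hy, hx⟩⟩,
      loopless := ⟨fun x h => G.loopless.irrefl x h.1⟩ }
  have hadj : ∀ x y, G.Adj x y ↔ (G₁.Adj x y ∨ G₂.Adj x y) := by
    intro x y
    constructor
    · intro h
      by_cases hx : x ∈ B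
      · exact Or.inl ⟨h, hx, (hcl x y h).1 hx⟩
      · exact Or.inr ⟨h, hx, fun hy => hx ((hcl x y h).2 hy)⟩
    · rintro (⟨h, _, _⟩ | ⟨h, _, _⟩) <;> exact h
  have hG₁le : G₁ ≤ G := fun x y h => h.1
  have hG₂le : G₂ ≤ G := fun x y h => h.1
  -- edge finsets
  have hEF : (Set.toFinite G.edgeSet).toFinset =
      (Set.toFinite G₁.edgeSet).toFinset ∪ (Set.toFinite G₂.edgeSet).toFinset := by
    ext p
    induction p using Sym2.ind with
    | _ x y =>
      simp only [Set.Finite.mem_toFinset, Finset.mem_union, SimpleGraph.mem_edgeSet]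
      exact hadj x y
  have hdisj : Disjoint (Set.toFinite G₁.edgeSet).toFinset (Set.toFinite G₂.edgeSet).toFinset := by
    rw [Finset.disjoint_left]
    intro p hp hp'
    induction p using Sym2.ind with
    | _ x y =>
      simp only [Set.Finite.mem_toFinset, SimpleGraph.mem_edgeSet] at hp hp'
      exact hp'.2.1 hp.2.1
  have hsum : eCard G = eCard G₁ + eCard G₂ := by
    rw [eCard, hEF, Finset.card_union_of_disjoint hdisj]; rfl
  -- G₁ is a tree on B
  have hcnt : eCard G₁ + 1 = B.card := by
    refine tree_count (acyclic_mono hG₁le hG) B (fun x y h => ⟨h.2.1, h.2.2⟩) ⟨a, haB⟩ ?_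
    intro b hb c hc
    obtain ⟨p⟩ := ((hmemB b).1 hb).2.symm.trans ((hmemB c).1 hc).2
    have hsupp : ∀ z ∈ p.support, z ∈ B := by
      intro z hz
      rw [hmemB]
      have hzA : z ∈ A := walk_support_prop (fun u v h => hE u v h) p (hBA hb) z hz
      have : G.Reachable b z := ⟨p.takeUntil z hz⟩
      exact ⟨hzA, ((hmemB b).1 hb).2.trans this⟩
    exact transfer_reach p (fun u v h hu hv => ⟨h, hsupp u hu, hsupp v hv⟩)
  refine ⟨B, haB, hBA, fun b hb => ((hmemB b).1 hb).2, G₂, acyclic_mono hG₂le hG, ?_, by omega⟩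
  intro x y h
  exact ⟨Finset.mem_sdiff.2 ⟨(hE x y h.1).1, h.2.1⟩, Finset.mem_sdiff.2 ⟨(hE x y h.1).2, h.2.2⟩⟩

lemma forest_bound_aux : ∀ (n : ℕ) {G : SimpleGraph W} {A : Finset W}, A.card ≤ n →
    G.IsAcyclic → (∀ x y, G.Adj x y → x ∈ A ∧ y ∈ A) → A.Nonempty →
    eCard G + 1 ≤ A.card := by
  intro n
  induction n with
  | zero =>
    intro G A hn _ _ hA
    exact absurd (Finset.card_pos.2 hA) (by omega)
  | succ n ih =>
    intro G A hn hG hE hA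
    obtain ⟨a, ha⟩ := hA
    obtain ⟨B, haB, hBA, _, G₂, hac2, hE2, hcount⟩ := forest_split hG hE ha
    have hsd := Finset.card_sdiff_add_card_eq_card hBA
    by_cases hBeq : A \ B = ∅
    · have hz : eCard G₂ = 0 := eCard_eq_zero (fun x y h => by
        have := (hE2 x y h).1; rw [hBeq] at this; simp at this)
      have := Finset.card_le_card hBA
      omega
    · have hBc : 1 ≤ B.card := Finset.card_pos.2 ⟨a, haB⟩
      have h2 := ih (G := G₂) (A := A \ B) (by omega) hac2 hE2
        (Finset.nonempty_of_ne_empty hBeq)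
      omega

lemma forest_bound {G : SimpleGraph W} (hG : G.IsAcyclic) {A : Finset W}
    (hE : ∀ x y, G.Adj x y → x ∈ A ∧ y ∈ A) (hA : A.Nonempty) :
    eCard G + 1 ≤ A.card :=
  forest_bound_aux A.card le_rfl hG hE hA

lemma forest_conn {G : SimpleGraph W} (hG : G.IsAcyclic) {A : Finset W}
    (hE : ∀ x y, G.Adj x y → x ∈ A ∧ y ∈ A) (hcard : A.card ≤ eCard G + 1) :
    ∀ a ∈ A, ∀ b ∈ A, G.Reachable a b := by
  intro a ha b hb
  obtain ⟨B, haB, hBA, hreach, G₂, hac2, hE2, hcount⟩ := forest_split hG hE ha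
  by_cases hBeq : A \ B = ∅
  · refine hreach b ?_
    by_contra h
    have := Finset.mem_sdiff.2 ⟨hb, h⟩
    rw [hBeq] at this; simp at this
  · exfalso
    have h2 := forest_bound hac2 hE2 (Finset.nonempty_of_ne_empty hBeq)
    have h3 := Finset.card_sdiff_add_card_eq_card hBA
    have h4 := Finset.card_le_card hBA
    omega

end Counting

section Hyper
variable {V : Type*} [Fintype V] [DecidableEq V]

/-- Restriction of a graph on hyperedges to edges whose both endpoints contain `v`. -/
def vres (F : SimpleGraph (Finset V)) (v : V) : SimpleGraph (Finset V) where
  Adj a b := F.Adj a b ∧ v ∈ a ∧ v ∈ b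
  symm := ⟨fun a b ⟨h, ha, hb⟩ => ⟨h.symm, hb, ha⟩⟩
  loopless := ⟨fun a h => F.loopless.irrefl a h.1⟩

lemma vres_le (F : SimpleGraph (Finset V)) (v : V) : vres F v ≤ F := by
  intro a b h; exact h.1

lemma fweight_eq_sum (F : SimpleGraph (Finset V)) :
    fweight F = ∑ v : V, eCard (vres F v) := by
  classical
  rw [fweight]
  have key : ∀ p ∈ (Set.toFinite F.edgeSet).toFinset,
      interWt p = ∑ v : V, (if p ∈ (Set.toFinite (vres F v).edgeSet).toFinset then 1 else 0) := by
    intro p hp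
    induction p using Sym2.ind with
    | _ a b =>
      rw [Set.Finite.mem_toFinset, SimpleGraph.mem_edgeSet] at hp
      have h1 : interWt s(a, b) = (a ∩ b).card := rfl
      have h2 : (a ∩ b) = Finset.univ.filter (fun v => v ∈ a ∧ v ∈ b) := by
        ext v; simp
      rw [h1, h2, Finset.card_filter]
      refine Finset.sum_congr rfl (fun v _ => ?_)
      refine if_congr ?_ rfl rfl
      simp only [Set.Finite.mem_toFinset, SimpleGraph.mem_edgeSet]
      constructor
      · intro h; exact ⟨hp, h.1, h.2⟩
      · intro h; exact ⟨h.2.1, h.2.2⟩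
  rw [Finset.sum_congr rfl key, Finset.sum_comm]
  refine Finset.sum_congr rfl (fun v _ => ?_)
  rw [Finset.sum_ite_mem]
  have hsub : (Set.toFinite (vres F v).edgeSet).toFinset ⊆ (Set.toFinite F.edgeSet).toFinset := by
    intro p hpp
    rw [Set.Finite.mem_toFinset] at hpp ⊢
    exact SimpleGraph.edgeSet_mono (vres_le F v) hpp
  rw [Finset.inter_eq_right.2 hsub]
  simp [eCard]

lemma vres_edges_in {E : Finset (Finset V)} {F : SimpleGraph (Finset V)}
    (hFE : ∀ e f, F.Adj e f → e ∈ E ∧ f ∈ E) (v : V) :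
    ∀ x y, (vres F v).Adj x y → x ∈ E.filter (fun e => v ∈ e) ∧ y ∈ E.filter (fun e => v ∈ e) :=
  fun x y ⟨h, hx, hy⟩ =>
    ⟨Finset.mem_filter.2 ⟨(hFE _ _ h).1, hx⟩, Finset.mem_filter.2 ⟨(hFE _ _ h).2, hy⟩⟩

lemma fweight_eq_filter_sum (E : Finset (Finset V)) (F : SimpleGraph (Finset V))
    (hFE : ∀ e f, F.Adj e f → e ∈ E ∧ f ∈ E) :
    fweight F = ∑ v ∈ Finset.univ.filter (fun v => 1 ≤ hdeg E v), eCard (vres F v) := by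
  rw [fweight_eq_sum]
  refine (Finset.sum_subset (Finset.filter_subset _ _) ?_).symm
  intro v _ hv
  rw [Finset.mem_filter] at hv
  have hdz : hdeg E v = 0 := by
    rcases Nat.eq_zero_or_pos (hdeg E v) with h | h
    · exact h
    · exact absurd ⟨Finset.mem_univ v, h⟩ hv
  refine eCard_eq_zero (fun x y h => ?_)
  have hx := (vres_edges_in hFE v x y h).1
  rw [hdeg, Finset.card_eq_zero] at hdz
  rw [hdz] at hx
  simp at hx

lemma fweight_le_hweight (E : Finset (Finset V)) (F : SimpleGraph (Finset V))
    (hac : F.IsAcyclic) (hFE : ∀ e f, F.Adj e f → e ∈ E ∧ f ∈ E) :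
    fweight F ≤ hweight E := by
  rw [fweight_eq_filter_sum E F hFE, hweight]
  refine Finset.sum_le_sum (fun v hv => ?_)
  rw [Finset.mem_filter] at hv
  have hb := forest_bound (acyclic_mono (vres_le F v) hac) (vres_edges_in hFE v)
    (Finset.card_pos.1 (by rw [← hdeg]; omega))
  rw [← hdeg] at hb
  omega

end Hyper

/-- **Lemma 3.1(a)**: `H` is acyclic iff `w(H)` equals the weight of a
maximum-weight spanning forest of `wg(H)`. -/
theorem acyclic_iff_maxSpanningForest_weight_eq (E : Finset (Finset V)) :
    IsAcyclicHypergraph E ↔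
      ∃ S, IsMaxSpanningForest (wg E) S ∧ fweight S = hweight E := by
  constructor
  · rintro ⟨J, ⟨hJac, hJE⟩, hjoin⟩
    set S := J ⊓ wg E with hSdef
    have hSle : S ≤ wg E := inf_le_right
    have hSleJ : S ≤ J := inf_le_left
    have hSE : ∀ e f, S.Adj e f → e ∈ E ∧ f ∈ E := fun e f h => hJE e f h.1
    have key : ∀ v : V, ∀ e ∈ E, ∀ f ∈ E, v ∈ e → v ∈ f → (vres S v).Reachable e f := by
      intro v e he f hf hve hvf
      obtain ⟨hr, hpath⟩ := hjoin e he f hf v hve hvf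
      obtain ⟨w⟩ := hr
      have hsupp : ∀ g ∈ (w.toPath : J.Walk e f).support, v ∈ g := hpath _ w.toPath.2
      refine transfer_reach (w.toPath : J.Walk e f) ?_
      intro x y hxy hx hy
      have hx' := hsupp x hx
      have hy' := hsupp y hy
      exact ⟨⟨hxy, (hJE x y hxy).1, (hJE x y hxy).2, hxy.ne,
        ⟨v, Finset.mem_inter.2 ⟨hx', hy'⟩⟩⟩, hx', hy'⟩
    have hAdjR : ∀ e f, (wg E).Adj e f → S.Reachable e f := by
      rintro e f ⟨he, hf, hne, v, hv⟩
      rw [Finset.mem_inter] at hv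
      exact (key v e he f hf hv.1 hv.2).mono (vres_le S v)
    have hwS : fweight S = hweight E := by
      rw [fweight_eq_filter_sum E S hSE, hweight]
      refine Finset.sum_congr rfl (fun v hv => ?_)
      rw [Finset.mem_filter] at hv
      have hAv : (E.filter (fun e => v ∈ e)).Nonempty :=
        Finset.card_pos.1 (by rw [← hdeg]; omega)
      have ht := tree_count (acyclic_mono (vres_le S v) (acyclic_mono hSleJ hJac))
        (E.filter (fun e => v ∈ e)) (vres_edges_in hSE v) hAv ?_
      · rw [← hdeg] at ht; omega
      · intro a ha b hb
        rw [Finset.mem_filter] at ha hb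
        exact key v a ha.1 b hb.1 ha.2 hb.2
    have hsf : IsSpanningForest (wg E) S := by
      refine ⟨hSle, acyclic_mono hSleJ hJac, fun a b => ⟨fun h => h.mono hSle, fun h => ?_⟩⟩
      obtain ⟨w⟩ := h
      clear hwS
      induction w with
      | nil => exact SimpleGraph.Reachable.refl _
      | cons h q ih => exact (hAdjR _ _ h).trans ih
    refine ⟨S, ⟨hsf, fun S' hS' => ?_⟩, hwS⟩
    rw [hwS]
    exact fweight_le_hweight E S' hS'.2.1
      (fun e f h => ⟨(hS'.1 h).1, (hS'.1 h).2.1⟩)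
  · rintro ⟨S, ⟨⟨hSle, hSac, hSreach⟩, _⟩, hw⟩
    have hSE : ∀ e f, S.Adj e f → e ∈ E ∧ f ∈ E := fun e f h => ⟨(hSle h).1, (hSle h).2.1⟩
    have hle : ∀ v ∈ Finset.univ.filter (fun v => 1 ≤ hdeg E v),
        eCard (vres S v) ≤ hdeg E v - 1 := by
      intro v hv
      rw [Finset.mem_filter] at hv
      have hb := forest_bound (acyclic_mono (vres_le S v) hSac) (vres_edges_in hSE v)
        (Finset.card_pos.1 (by rw [← hdeg]; omega))
      rw [← hdeg] at hb
      omega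
    have hsum : ∑ v ∈ Finset.univ.filter (fun v => 1 ≤ hdeg E v), eCard (vres S v) =
        ∑ v ∈ Finset.univ.filter (fun v => 1 ≤ hdeg E v), (hdeg E v - 1) := by
      rw [← fweight_eq_filter_sum E S hSE, hw, hweight]
    have heq := (Finset.sum_eq_sum_iff_of_le hle).1 hsum
    have hconn : ∀ v : V, 1 ≤ hdeg E v → ∀ a ∈ E.filter (fun e => v ∈ e),
        ∀ b ∈ E.filter (fun e => v ∈ e), (vres S v).Reachable a b := by
      intro v hv
      have he := heq v (Finset.mem_filter.2 ⟨Finset.mem_univ v, hv⟩)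
      refine forest_conn (acyclic_mono (vres_le S v) hSac) (vres_edges_in hSE v) ?_
      rw [← hdeg]
      omega
    refine ⟨S, ⟨hSac, hSE⟩, ?_⟩
    intro e he f hf v hve hvf
    have hdv : 1 ≤ hdeg E v := by
      rw [hdeg]
      exact Finset.card_pos.2 ⟨e, Finset.mem_filter.2 ⟨he, hve⟩⟩
    have hvre := hconn v hdv e (Finset.mem_filter.2 ⟨he, hve⟩) f (Finset.mem_filter.2 ⟨hf, hvf⟩)
    obtain ⟨w⟩ := hvre
    have hsupp : ∀ x ∈ w.support, v ∈ x :=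
      walk_support_prop (G := vres S v) (P := fun x => v ∈ x) (fun x y h => ⟨h.2.1, h.2.2⟩) w hve
    have hvle : vres S v ≤ S := vres_le S v
    refine ⟨⟨w.transfer S (fun e' he' => SimpleGraph.edgeSet_mono hvle
      (w.edges_subset_edgeSet he'))⟩, ?_⟩
    intro p hp g hg
    set w' := w.transfer S (fun e' he' => SimpleGraph.edgeSet_mono hvle
      (w.edges_subset_edgeSet he')) with hw'
    have hpq : p = (w'.toPath : S.Walk e f) :=
      Subtype.ext_iff.1 (hSac.path_unique ⟨p, hp⟩ w'.toPath)
    rw [hpq] at hg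
    have hg2 := SimpleGraph.Walk.support_toPath_subset w' hg
    rw [hw', SimpleGraph.Walk.support_transfer] at hg2
    exact hsupp g hg2
end

section
/- For every hypergraph H and every forest F whose node set is the set of hyperedges of H, the weight of F is at most the weight w(H) of H. -/
/-!
Lemma 3.1(a) (Bernstein–Goodman): a hypergraph `H` is acyclic iff the weight `w(H)`
equals the weight of a maximum-weight spanning forest of the weighted hyperedge
graph `wg(H)`.

A hypergraph on a finite vertex type `V` is given by its finite set `E` of
hyperedges, each a `Finset V`.
-/

variable {V : Type*} [Fintype V] [DecidableEq V]

open Finset SimpleGraph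

lemma acyclic_aux {α : Type*} [DecidableEq α] :
    ∀ (n : ℕ) (G : SimpleGraph α), G.IsAcyclic → ∀ (S : Finset α) (T : Finset (Sym2 α)),
      (∀ p ∈ T, p ∈ G.edgeSet ∧ ∀ x ∈ p, x ∈ S) → T.card ≤ n → T.card ≤ S.card - 1 := by
  classical
  intro n
  induction n with
  | zero =>
    intro G hG S T hT hcard
    omega
  | succ n ih =>
    intro G hG S T hT hcard
    rcases T.eq_empty_or_nonempty with rfl | ⟨p, hp⟩
    · simp
    revert hp
    induction p using Sym2.ind with
    | _ a b =>
    intro hp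
    have hab : G.Adj a b := (hT _ hp).1
    set G' := G.deleteEdges {s(a,b)} with hG'def
    have hle : G' ≤ G := sdiff_le
    have hG'ac : G'.IsAcyclic := fun v c hc => hG (c.mapLe hle) (hc.mapLe hle)
    have hbr : ¬ G'.Reachable a b :=
      ((SimpleGraph.isAcyclic_iff_forall_adj_isBridge.mp hG) hab)
    set Sa := S.filter (fun x => G'.Reachable a x) with hSa
    set Sb := S.filter (fun x => ¬ G'.Reachable a x) with hSb
    have haSa : a ∈ Sa := mem_filter.2 ⟨(hT _ hp).2 a (by simp), Reachable.refl a⟩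
    have hbSb : b ∈ Sb := mem_filter.2 ⟨(hT _ hp).2 b (by simp), hbr⟩
    set T' := T.erase s(a,b) with hT'def
    have key : ∀ q ∈ T', q ∈ G'.edgeSet ∧ ((∀ x ∈ q, x ∈ Sa) ∨ (∀ x ∈ q, x ∈ Sb)) := by
      intro q hq
      have hqT : q ∈ T := mem_of_mem_erase hq
      have hqne : q ≠ s(a,b) := ne_of_mem_erase hq
      have hqE : q ∈ G'.edgeSet := by
        rw [hG'def, edgeSet_deleteEdges]
        exact ⟨(hT _ hqT).1, by simpa using hqne⟩
      refine ⟨hqE, ?_⟩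
      revert hqE hqT
      induction q using Sym2.ind with
      | _ u v =>
      intro hqT hqE
      have huv : G'.Adj u v := hqE
      have huS : u ∈ S := (hT _ hqT).2 u (by simp)
      have hvS : v ∈ S := (hT _ hqT).2 v (by simp)
      by_cases hr : G'.Reachable a u
      · left
        intro x hx
        rcases Sym2.mem_iff.mp hx with rfl | rfl
        · exact mem_filter.2 ⟨huS, hr⟩
        · exact mem_filter.2 ⟨hvS, hr.trans huv.reachable⟩
      · right
        intro x hx
        rcases Sym2.mem_iff.mp hx with rfl | rfl
        · exact mem_filter.2 ⟨huS, hr⟩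
        · refine mem_filter.2 ⟨hvS, fun h => hr (h.trans huv.symm.reachable)⟩
    set Ta := T'.filter (fun q => ∀ x ∈ q, x ∈ Sa) with hTa
    set Tb := T'.filter (fun q => ∀ x ∈ q, x ∈ Sb) with hTb
    have hsub : T' ⊆ Ta ∪ Tb := by
      intro q hq
      rcases (key q hq).2 with h | h
      · exact mem_union_left _ (mem_filter.2 ⟨hq, h⟩)
      · exact mem_union_right _ (mem_filter.2 ⟨hq, h⟩)
    have hca : Ta.card ≤ Sa.card - 1 := by
      refine ih G' hG'ac Sa Ta (fun q hq => ?_) ?_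
      · exact ⟨(key q (mem_of_mem_filter _ hq)).1, (mem_filter.mp hq).2⟩
      · have h1 : Ta.card ≤ T'.card := card_le_card (filter_subset _ _)
        have h2 : T'.card = T.card - 1 := card_erase_of_mem hp
        omega
    have hcb : Tb.card ≤ Sb.card - 1 := by
      refine ih G' hG'ac Sb Tb (fun q hq => ?_) ?_
      · exact ⟨(key q (mem_of_mem_filter _ hq)).1, (mem_filter.mp hq).2⟩
      · have h1 : Tb.card ≤ T'.card := card_le_card (filter_subset _ _)
        have h2 : T'.card = T.card - 1 := card_erase_of_mem hp
        omega
    have hScard : Sa.card + Sb.card = S.card := card_filter_add_card_filter_not _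
    have h1 : 1 ≤ Sa.card := card_pos.2 ⟨a, haSa⟩
    have h2 : 1 ≤ Sb.card := card_pos.2 ⟨b, hbSb⟩
    have h3 : T'.card ≤ Ta.card + Tb.card := le_trans (card_le_card hsub) (card_union_le _ _)
    have h4 : T'.card = T.card - 1 := card_erase_of_mem hp
    have h5 : 1 ≤ T.card := card_pos.2 ⟨_, hp⟩
    omega

/-- For every hypergraph `H` and every forest `F` whose node set is the set of
hyperedges of `H`, the weight of `F` is at most the weight `w(H)` of `H`. -/
theorem forest_weight_le_hweight (E : Finset (Finset V)) (F : SimpleGraph (Finset V))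
    (hF : IsForestOn E F) :
    fweight F ≤ hweight E := by
  classical
  set T := (Set.toFinite F.edgeSet).toFinset with hTdef
  have hTE : ∀ p ∈ T, p ∈ F.edgeSet ∧ ∀ x ∈ p, x ∈ E := by
    intro p hp
    have hpe : p ∈ F.edgeSet := (Set.Finite.mem_toFinset _).mp hp
    refine ⟨hpe, ?_⟩
    revert hpe
    induction p using Sym2.ind with
    | _ a b =>
    intro hpe x hx
    have hadj : F.Adj a b := hpe
    rcases Sym2.mem_iff.mp hx with rfl | rfl
    · exact (hF.2 _ _ hadj).1
    · exact (hF.2 _ _ hadj).2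
  have step1 : fweight F = ∑ v ∈ Finset.univ, (T.filter (fun p => ∀ x ∈ p, v ∈ x)).card := by
    rw [fweight]
    have : ∀ p ∈ T, interWt p = (Finset.univ.filter (fun v => ∀ x ∈ p, v ∈ x)).card := by
      intro p _
      induction p using Sym2.ind with
      | _ a b =>
      have : interWt s(a, b) = (a ∩ b).card := rfl
      rw [this]
      congr 1
      ext v
      simp [Sym2.mem_iff, and_comm]
    rw [Finset.sum_congr rfl this]
    simp_rw [Finset.card_filter]
    rw [Finset.sum_comm]
  rw [step1]
  have step2 : ∀ v : V, (T.filter (fun p => ∀ x ∈ p, v ∈ x)).card ≤ hdeg E v - 1 := by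
    intro v
    refine acyclic_aux _ F hF.1 (E.filter (fun e => v ∈ e)) _ (fun q hq => ?_) le_rfl
    obtain ⟨hqT, hqv⟩ := Finset.mem_filter.mp hq
    exact ⟨(hTE q hqT).1, fun x hx => Finset.mem_filter.2 ⟨(hTE q hqT).2 x hx, hqv x hx⟩⟩
  calc ∑ v ∈ Finset.univ, (T.filter (fun p => ∀ x ∈ p, v ∈ x)).card
      ≤ ∑ v ∈ Finset.univ, (hdeg E v - 1) := Finset.sum_le_sum (fun v _ => step2 v)
    _ = hweight E := by
        rw [hweight]
        refine (Finset.sum_subset (Finset.filter_subset _ _) ?_).symm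
        intro x _ hx
        simp only [Finset.mem_filter, Finset.mem_univ, true_and, not_le, Nat.lt_one_iff] at hx
        omega
end

section
/- A forest F whose node set is the set of hyperedges of a hypergraph H is a join forest of H if and only if the weight of F equals the weight w(H) of H. -/
/-!
Lemma 3.1(a) (Bernstein–Goodman): a hypergraph `H` is acyclic iff the weight `w(H)`
equals the weight of a maximum-weight spanning forest of the weighted hyperedge
graph `wg(H)`.

A hypergraph on a finite vertex type `V` is given by its finite set `E` of
hyperedges, each a `Finset V`.
-/

variable {V : Type*} [Fintype V] [DecidableEq V]

-- auxiliary lemmas to be inserted before the main theorem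

section AuxLemmas

open SimpleGraph

private lemma isAcyclic_anti {W : Type*} {G H : SimpleGraph W} (h : H ≤ G)
    (hG : G.IsAcyclic) : H.IsAcyclic := fun _ c hc => hG (c.mapLe h) ((SimpleGraph.Walk.mapLe_isCycle h).mpr hc)

private lemma induce_acyclic {W : Type*} {F : SimpleGraph W} (hA : F.IsAcyclic)
    (S : Set W) : (F.induce S).IsAcyclic := fun _ c hc =>
  hA (c.map (SimpleGraph.Embedding.induce (G := F) S).toHom)
    ((SimpleGraph.Walk.map_isCycle_iff_of_injective
      (SimpleGraph.Embedding.induce (G := F) S).injective).mpr hc)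

/-- Key counting lemma: for an acyclic graph on a finite vertex type, the number of
edges plus the number of connected components is at most the number of vertices. -/
private lemma acyclic_count {W : Type*} [Fintype W] :
    ∀ (n : ℕ) (G : SimpleGraph W), G.IsAcyclic → Nat.card G.edgeSet = n →
      n + Nat.card G.ConnectedComponent ≤ Nat.card W := by
  intro n
  induction n with
  | zero =>
    intro G _ _
    rw [Nat.zero_add]
    exact Nat.card_le_card_of_surjective _
      (fun C => ConnectedComponent.ind (fun w => ⟨w, rfl⟩) C)
  | succ n ih =>
    intro G hG hcard
    have hne : G.edgeSet.Nonempty := by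
      rw [Set.nonempty_iff_ne_empty]
      intro h
      rw [h] at hcard
      simp at hcard
    obtain ⟨e, he⟩ := hne
    induction e using Sym2.ind with
    | _ u v =>
    have hadj : G.Adj u v := he
    have hle : (G \ fromEdgeSet {s(u, v)}) ≤ G := sdiff_le
    have hG'a : (G \ fromEdgeSet {s(u, v)}).IsAcyclic := isAcyclic_anti hle hG
    have hbr : ¬ (G \ fromEdgeSet {s(u, v)}).Reachable u v :=
      isBridge_iff.mp (isAcyclic_iff_forall_adj_isBridge.mp hG hadj)
    have hes : (G \ fromEdgeSet {s(u, v)}).edgeSet = G.edgeSet \ {s(u, v)} := by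
      rw [edgeSet_sdiff, edgeSet_fromEdgeSet]
      ext p
      simp only [Set.mem_diff, Set.mem_singleton_iff, Set.mem_setOf_eq]
      constructor
      · rintro ⟨hp, hq⟩
        exact ⟨hp, fun hpe => hq ⟨hpe, G.not_isDiag_of_mem_edgeSet hp⟩⟩
      · rintro ⟨hp, hq⟩
        exact ⟨hp, fun h => hq h.1⟩
    have hcard' : Nat.card (G \ fromEdgeSet {s(u, v)}).edgeSet = n := by
      rw [Nat.card_coe_set_eq, hes, Set.ncard_diff_singleton_of_mem he,
        ← Nat.card_coe_set_eq, hcard]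
      omega
    have key := ih (G \ fromEdgeSet {s(u, v)}) hG'a hcard'
    letI : Fintype G.ConnectedComponent := Fintype.ofFinite _
    letI : Fintype (G \ fromEdgeSet {s(u, v)}).ConnectedComponent := Fintype.ofFinite _
    have hsurj : Function.Surjective
        (ConnectedComponent.map (Hom.ofLE hle)) := fun C =>
      ConnectedComponent.ind
        (fun w => ⟨(G \ fromEdgeSet {s(u, v)}).connectedComponentMk w, rfl⟩) C
    have hninj : ¬ Function.Injective
        (ConnectedComponent.map (Hom.ofLE hle)) := by
      intro hinj
      have h1 : (ConnectedComponent.map (Hom.ofLE hle))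
            ((G \ fromEdgeSet {s(u, v)}).connectedComponentMk u)
          = (ConnectedComponent.map (Hom.ofLE hle))
            ((G \ fromEdgeSet {s(u, v)}).connectedComponentMk v) := by
        simp only [ConnectedComponent.map_mk, Hom.ofLE_apply]
        exact ConnectedComponent.sound hadj.reachable
      exact hbr (ConnectedComponent.eq.mp (hinj h1))
    have hlt := Fintype.card_lt_of_surjective_not_injective _ hsurj hninj
    have hcc : Nat.card G.ConnectedComponent
        < Nat.card (G \ fromEdgeSet {s(u, v)}).ConnectedComponent := by
      simpa [Nat.card_eq_fintype_card] using hlt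
    omega

private lemma tree_count_s4 {W : Type*} [Fintype W] {G : SimpleGraph W}
    (hc : G.Connected) (ha : G.IsAcyclic) :
    Nat.card G.edgeSet + 1 = Nat.card W := by
  classical
  letI : Fintype G.edgeSet := Fintype.ofFinite _
  have h := SimpleGraph.IsTree.card_edgeFinset ⟨hc, ha⟩
  rw [Nat.card_coe_set_eq, Nat.card_eq_fintype_card, ← h]
  congr 1
  rw [Set.ncard_eq_toFinset_card']
  unfold SimpleGraph.edgeFinset
  congr!

end AuxLemmas

section HyperAux

open SimpleGraph Finset

private lemma walk_support_mem {E : Finset (Finset V)} {F : SimpleGraph (Finset V)}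
    (hF : IsForestOn E F) {a b : Finset V} (p : F.Walk a b) :
    a ∈ E → ∀ g ∈ p.support, g ∈ E := by
  induction p with
  | nil =>
    intro ha g hg
    rw [SimpleGraph.Walk.support_nil, List.mem_singleton] at hg
    rwa [hg]
  | cons h' p ih =>
    intro ha g hg
    rw [SimpleGraph.Walk.support_cons, List.mem_cons] at hg
    rcases hg with rfl | hg
    · exact ha
    · exact ih (hF.2 _ _ h').2 g hg

private lemma reachable_induce_s4 {F : SimpleGraph (Finset V)} {S : Set (Finset V)}
    {a b : Finset V} (p : F.Walk a b) :
    (∀ g ∈ p.support, g ∈ S) → ∀ (ha : a ∈ S) (hb : b ∈ S),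
      (F.induce S).Reachable ⟨a, ha⟩ ⟨b, hb⟩ := by
  induction p with
  | nil =>
    intro _ ha hb
    exact SimpleGraph.Reachable.refl _
  | @cons u c w h' p ih =>
    intro h ha hb
    have hc : c ∈ S := h c (by simp)
    refine (SimpleGraph.Adj.reachable
        (?_ : (F.induce S).Adj ⟨u, ha⟩ ⟨c, hc⟩)).trans
      (ih (fun g hg => h g (by simp [hg])) hc hb)
    exact h'

private lemma hweight_eq (E : Finset (Finset V)) :
    hweight E = ∑ v : V, (hdeg E v - 1) := by
  unfold hweight
  exact Finset.sum_filter_of_ne (fun x _ h => by omega)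

private lemma nat_card_coe (E : Finset (Finset V)) (v : V) :
    Nat.card (↑(E.filter (fun e => v ∈ e)) : Set (Finset V)) = hdeg E v := by
  rw [Nat.card_coe_set_eq, Set.ncard_coe_finset]
  rfl

private lemma fweight_eq_sum_s4 (E : Finset (Finset V)) (F : SimpleGraph (Finset V))
    (hF : IsForestOn E F) :
    fweight F
      = ∑ v : V, Nat.card ((F.induce ↑(E.filter (fun e => v ∈ e))).edgeSet) := by
  classical
  unfold fweight
  have card_eq : ∀ v : V,
      (((Set.toFinite F.edgeSet).toFinset.filter (fun p => ∀ e ∈ p, v ∈ e)).card : ℕ)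
        = Nat.card ((F.induce ↑(E.filter (fun e => v ∈ e))).edgeSet) := by
    intro v
    have himg : Sym2.map (Subtype.val :
          (↑(E.filter (fun e => v ∈ e)) : Set (Finset V)) → Finset V) ''
          (F.induce ↑(E.filter (fun e => v ∈ e))).edgeSet
        = ↑((Set.toFinite F.edgeSet).toFinset.filter (fun p => ∀ e ∈ p, v ∈ e)) := by
      ext q
      constructor
      · rintro ⟨p, hp, rfl⟩
        induction p using Sym2.ind with
        | _ x y =>
          have hadj : F.Adj ↑x ↑y := hp
          have hx := x.2
          have hy := y.2
          rw [Finset.mem_coe, Finset.mem_filter] at hx hy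
          rw [Sym2.map_pair_eq, Finset.mem_coe, Finset.mem_filter,
            Set.Finite.mem_toFinset]
          refine ⟨hadj, fun e he => ?_⟩
          rw [Sym2.mem_iff] at he
          rcases he with rfl | rfl
          · exact hx.2
          · exact hy.2
      · intro hq
        rw [Finset.mem_coe, Finset.mem_filter, Set.Finite.mem_toFinset] at hq
        obtain ⟨hq1, hq2⟩ := hq
        induction q using Sym2.ind with
        | _ x y =>
          have hadj : F.Adj x y := hq1
          have hvx : v ∈ x := hq2 x (Sym2.mem_mk_left x y)
          have hvy : v ∈ y := hq2 y (Sym2.mem_mk_right x y)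
          have hx' : x ∈ (↑(E.filter (fun e => v ∈ e)) : Set (Finset V)) := by
            rw [Finset.mem_coe, Finset.mem_filter]
            exact ⟨(hF.2 x y hadj).1, hvx⟩
          have hy' : y ∈ (↑(E.filter (fun e => v ∈ e)) : Set (Finset V)) := by
            rw [Finset.mem_coe, Finset.mem_filter]
            exact ⟨(hF.2 x y hadj).2, hvy⟩
          exact ⟨s(⟨x, hx'⟩, ⟨y, hy'⟩), hadj, rfl⟩
    rw [Nat.card_coe_set_eq]
    calc ((Set.toFinite F.edgeSet).toFinset.filter (fun p => ∀ e ∈ p, v ∈ e)).card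
        = (↑((Set.toFinite F.edgeSet).toFinset.filter (fun p => ∀ e ∈ p, v ∈ e)) :
            Set (Sym2 (Finset V))).ncard := (Set.ncard_coe_finset _).symm
      _ = _ := by
          rw [← himg,
            Set.ncard_image_of_injective _ (Sym2.map.injective Subtype.val_injective)]
  have h1 : ∀ p ∈ (Set.toFinite F.edgeSet).toFinset,
      interWt p = ∑ v : V, (if ∀ e ∈ p, v ∈ e then 1 else 0) := by
    intro p _
    induction p using Sym2.ind with
    | _ x y =>
      have h2 : interWt s(x, y) = (x ∩ y).card := rfl
      have h3 : x ∩ y = Finset.univ.filter (fun v : V => ∀ e ∈ s(x, y), v ∈ e) := by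
        ext w
        simp [Sym2.mem_iff]
      rw [h2, h3, Finset.card_filter]
  calc ∑ p ∈ (Set.toFinite F.edgeSet).toFinset, interWt p
      = ∑ p ∈ (Set.toFinite F.edgeSet).toFinset,
          ∑ v : V, (if ∀ e ∈ p, v ∈ e then 1 else 0) := Finset.sum_congr rfl h1
    _ = ∑ v : V, ∑ p ∈ (Set.toFinite F.edgeSet).toFinset,
          (if ∀ e ∈ p, v ∈ e then 1 else 0) := Finset.sum_comm
    _ = ∑ v : V, Nat.card ((F.induce ↑(E.filter (fun e => v ∈ e))).edgeSet) := by
        refine Finset.sum_congr rfl fun v _ => ?_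
        rw [← card_eq v, Finset.card_filter]

end HyperAux

section PerVertex

open SimpleGraph Finset

private lemma card_empty_case (E : Finset (Finset V)) (F : SimpleGraph (Finset V)) (v : V)
    (h : E.filter (fun e => v ∈ e) = ∅) :
    Nat.card ((F.induce ↑(E.filter (fun e => v ∈ e))).edgeSet) = 0 := by
  have hE : (F.induce (↑(E.filter (fun e => v ∈ e)) : Set (Finset V))).edgeSet = ∅ := by
    ext q
    simp only [Set.mem_empty_iff_false, iff_false]
    induction q using Sym2.ind with
    | _ x y =>
      intro hadj
      have hx := x.2
      rw [Finset.mem_coe] at hx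
      exact absurd hx (by simp [h])
  rw [Nat.card_coe_set_eq, hE, Set.ncard_empty]

private lemma card_of_join (E : Finset (Finset V)) (F : SimpleGraph (Finset V))
    (hF : IsForestOn E F) (hJ : IsJoinForest E F) (v : V) :
    Nat.card ((F.induce ↑(E.filter (fun e => v ∈ e))).edgeSet) = hdeg E v - 1 := by
  rcases (E.filter (fun e => v ∈ e)).eq_empty_or_nonempty with h | h
  · rw [card_empty_case E F v h]
    have h0 : hdeg E v = 0 := by rw [hdeg, h]; rfl
    omega
  · have hconn : (F.induce ↑(E.filter (fun e => v ∈ e))).Connected := by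
      rw [connected_iff]
      constructor
      · rintro ⟨a, ha⟩ ⟨b, hb⟩
        have ha' := ha
        have hb' := hb
        rw [Finset.mem_coe, Finset.mem_filter] at ha' hb'
        obtain ⟨hreach, hpaths⟩ := hJ.2 a ha'.1 b hb'.1 v ha'.2 hb'.2
        obtain ⟨w⟩ := hreach
        have hq := w.toPath.2
        have hsupE := walk_support_mem hF w.toPath.1 ha'.1
        have hsupv := hpaths w.toPath.1 hq
        exact reachable_induce_s4 (w.toPath.1)
          (fun g hg => by
            rw [Finset.mem_coe, Finset.mem_filter]
            exact ⟨hsupE g hg, hsupv g hg⟩) ha hb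
      · obtain ⟨e, he⟩ := h
        exact ⟨⟨e, Finset.mem_coe.mpr he⟩⟩
    have htree := tree_count_s4 hconn (induce_acyclic hF.1 _)
    rw [nat_card_coe E v] at htree
    have hd : 1 ≤ hdeg E v := Finset.card_pos.mpr h
    omega

private lemma card_le_hyper (E : Finset (Finset V)) (F : SimpleGraph (Finset V))
    (hF : IsForestOn E F) (v : V) :
    Nat.card ((F.induce ↑(E.filter (fun e => v ∈ e))).edgeSet) ≤ hdeg E v - 1 := by
  rcases (E.filter (fun e => v ∈ e)).eq_empty_or_nonempty with h | h
  · rw [card_empty_case E F v h]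
    exact Nat.zero_le _
  · obtain ⟨e, he⟩ := h
    have hcount := acyclic_count _ (F.induce ↑(E.filter (fun e => v ∈ e)))
      (induce_acyclic hF.1 _) rfl
    rw [nat_card_coe E v] at hcount
    haveI : Nonempty (↑(E.filter (fun e => v ∈ e)) : Set (Finset V)) :=
      ⟨⟨e, Finset.mem_coe.mpr he⟩⟩
    haveI : Nonempty ((F.induce ↑(E.filter (fun e => v ∈ e))).ConnectedComponent) :=
      ⟨(F.induce ↑(E.filter (fun e => v ∈ e))).connectedComponentMk (Classical.arbitrary _)⟩
    have hpos : 0 < Nat.card ((F.induce ↑(E.filter (fun e => v ∈ e))).ConnectedComponent) :=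
      Nat.card_pos
    omega

private lemma connected_of_card (E : Finset (Finset V)) (F : SimpleGraph (Finset V))
    (hF : IsForestOn E F) (v : V) (hne : (E.filter (fun e => v ∈ e)).Nonempty)
    (hcard : Nat.card ((F.induce ↑(E.filter (fun e => v ∈ e))).edgeSet) = hdeg E v - 1) :
    (F.induce ↑(E.filter (fun e => v ∈ e))).Connected := by
  obtain ⟨e, he⟩ := hne
  haveI : Nonempty (↑(E.filter (fun e => v ∈ e)) : Set (Finset V)) :=
    ⟨⟨e, Finset.mem_coe.mpr he⟩⟩
  haveI : Nonempty ((F.induce ↑(E.filter (fun e => v ∈ e))).ConnectedComponent) :=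
    ⟨(F.induce ↑(E.filter (fun e => v ∈ e))).connectedComponentMk (Classical.arbitrary _)⟩
  have hd : 1 ≤ hdeg E v := Finset.card_pos.mpr ⟨e, he⟩
  have hcount := acyclic_count _ (F.induce ↑(E.filter (fun e => v ∈ e)))
    (induce_acyclic hF.1 _) rfl
  rw [nat_card_coe E v, hcard] at hcount
  have hpos : 0 < Nat.card ((F.induce ↑(E.filter (fun e => v ∈ e))).ConnectedComponent) :=
    Nat.card_pos
  have hone : Nat.card ((F.induce ↑(E.filter (fun e => v ∈ e))).ConnectedComponent) = 1 := by
    omega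
  haveI hsub : Subsingleton ((F.induce ↑(E.filter (fun e => v ∈ e))).ConnectedComponent) :=
    (Nat.card_eq_one_iff_unique.mp hone).1
  rw [connected_iff]
  refine ⟨fun a b => ?_, inferInstance⟩
  exact ConnectedComponent.eq.mp (Subsingleton.elim _ _)

end PerVertex

/-- A forest `F` whose node set is the set of hyperedges of a hypergraph `H` is a
join forest of `H` if and only if the weight of `F` equals the weight `w(H)` of `H`. -/
theorem isJoinForest_iff_weight_eq (E : Finset (Finset V)) (F : SimpleGraph (Finset V))
    (hF : IsForestOn E F) :
    IsJoinForest E F ↔ fweight F = hweight E := by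
  classical
  have hsum := fweight_eq_sum_s4 E F hF
  have hw := hweight_eq E
  constructor
  · intro hJ
    rw [hsum, hw]
    exact Finset.sum_congr rfl fun v _ => card_of_join E F hF hJ v
  · intro heq
    have hEq := (Finset.sum_eq_sum_iff_of_le
        (fun (v : V) (_ : v ∈ Finset.univ) => card_le_hyper E F hF v)).1
      (by rw [← hsum, ← hw, heq])
    refine ⟨hF, fun e he f hf v hv hvf => ?_⟩
    have hne : (E.filter (fun e' => v ∈ e')).Nonempty := ⟨e, Finset.mem_filter.mpr ⟨he, hv⟩⟩
    have hconn := connected_of_card E F hF v hne (hEq v (Finset.mem_univ v))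
    have he' : e ∈ (↑(E.filter (fun e' => v ∈ e')) : Set (Finset V)) :=
      Finset.mem_coe.mpr (Finset.mem_filter.mpr ⟨he, hv⟩)
    have hf' : f ∈ (↑(E.filter (fun e' => v ∈ e')) : Set (Finset V)) :=
      Finset.mem_coe.mpr (Finset.mem_filter.mpr ⟨hf, hvf⟩)
    obtain ⟨w⟩ := hconn.preconnected ⟨e, he'⟩ ⟨f, hf'⟩
    let ι := (SimpleGraph.Embedding.induce
      (G := F) (↑(E.filter (fun e' => v ∈ e')) : Set (Finset V))).toHom
    let w' : F.Walk e f := w.map ι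
    have hsup : ∀ g ∈ w'.support, v ∈ g := by
      intro g hg
      change g ∈ (w.map ι).support at hg
      rw [SimpleGraph.Walk.support_map, List.mem_map] at hg
      obtain ⟨x, _, rfl⟩ := hg
      have hx := x.2
      rw [Finset.mem_coe, Finset.mem_filter] at hx
      exact hx.2
    refine ⟨⟨w'⟩, fun p hp g hg => ?_⟩
    have huniq : (⟨p, hp⟩ : F.Path e f) = w'.toPath := hF.1.path_unique _ _
    have hpe : p = w'.toPath.1 := congrArg Subtype.val huniq
    rw [hpe] at hg
    exact hsup g (w'.support_toPath_subset hg)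
end

section
/- Every hypergraph H has a maximum-weight spanning forest S of its weighted hyperedge graph wg(H) that satisfies Invariant (★); consequently, in such a forest S every node e has degree at most 2·(2^{|e|} − 1). -/
/-!
Lemma 3.1(a) (Bernstein–Goodman): a hypergraph `H` is acyclic iff the weight `w(H)`
equals the weight of a maximum-weight spanning forest of the weighted hyperedge
graph `wg(H)`.

A hypergraph on a finite vertex type `V` is given by its finite set `E` of
hyperedges, each a `Finset V`.
-/

variable {V : Type*} [Fintype V] [DecidableEq V]

/-- Invariant (★): for every hyperedge `e` and every nonempty `A ⊆ e`, the forest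
`S` has at most two edges `(e, f)` with `e ∩ f = A`. -/
def InvariantStar (E : Finset (Finset V)) (S : SimpleGraph (Finset V)) : Prop :=
  ∀ e ∈ E, ∀ A : Finset V, A.Nonempty → A ⊆ e →
    {f : Finset V | S.Adj e f ∧ e ∩ f = A}.ncard ≤ 2

set_option linter.unusedSectionVars false
set_option maxHeartbeats 1600000

open SimpleGraph

namespace BGAux

variable {α : Type*} [DecidableEq α]

lemma reachable_of_forall_adj {G H : SimpleGraph α} (h : ∀ u v, G.Adj u v → H.Reachable u v)
    {a b : α} (hab : G.Reachable a b) : H.Reachable a b := by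
  rw [SimpleGraph.reachable_iff_reflTransGen] at hab
  induction hab with
  | refl => exact Reachable.refl _
  | tail _ hcb ih => exact ih.trans (h _ _ hcb)

lemma isAcyclic_mono {G H : SimpleGraph α} (hle : H ≤ G) (hG : G.IsAcyclic) : H.IsAcyclic := by
  intro v c hc
  exact hG (c.mapLe hle) (hc.mapLe hle)

lemma isAcyclic_sup_edge {G : SimpleGraph α} {a b : α} (hG : G.IsAcyclic)
    (hne : a ≠ b) (hr : ¬ G.Reachable a b) : (G ⊔ edge a b).IsAcyclic := by
  intro v c hc
  by_cases hmem : s(a, b) ∈ c.edges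
  · have h2 : ((G ⊔ edge a b) \ fromEdgeSet {s(a, b)}).Reachable a b :=
      ((adj_and_reachable_delete_edges_iff_exists_cycle.2 ⟨v, c, hc, hmem⟩).2)
    apply hr
    refine reachable_of_forall_adj (fun u w huw => ?_) h2
    rcases huw with ⟨huw, hnot⟩
    rcases huw with huw | huw
    · exact huw.reachable
    · exfalso
      rw [edge_adj] at huw
      apply hnot
      simp only [fromEdgeSet_adj]
      rcases huw.1 with ⟨rfl, rfl⟩ | ⟨rfl, rfl⟩
      · exact ⟨rfl, huw.2⟩
      · exact ⟨Sym2.eq_swap, huw.2⟩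
  · have hsub : ∀ e ∈ c.edges, e ∈ G.edgeSet := by
      intro e he
      have : e ∈ (G ⊔ edge a b).edgeSet := c.edges_subset_edgeSet he
      rw [edgeSet_sup, edge_edgeSet_of_ne hne] at this
      rcases this with h | h
      · exact h
      · exact absurd (h ▸ he) hmem
    exact hG (c.transfer G hsub) (hc.transfer hsub)

lemma edge_le_of_adj {G : SimpleGraph α} {u v : α} (h : G.Adj u v) : edge u v ≤ G := by
  intro a b hab
  rw [edge_adj] at hab
  rcases hab.1 with ⟨rfl, rfl⟩ | ⟨rfl, rfl⟩
  · exact h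
  · exact h.symm

lemma exists_spanning_forest' [Fintype α] (G : SimpleGraph α) :
    ∃ S, S ≤ G ∧ S.IsAcyclic ∧ ∀ a b, S.Reachable a b ↔ G.Reachable a b := by
  classical
  let T : Finset (SimpleGraph α) := Finset.univ.filter (fun S => S ≤ G ∧ S.IsAcyclic)
  have hbot : (⊥ : SimpleGraph α) ∈ T := by
    simp [T, SimpleGraph.isAcyclic_bot, bot_le]
  obtain ⟨S, hSmem, hSmax⟩ := T.exists_max_image (fun S => S.edgeSet.ncard) ⟨⊥, hbot⟩
  rw [Finset.mem_filter] at hSmem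
  obtain ⟨-, hle, hacyc⟩ := hSmem
  refine ⟨S, hle, hacyc, fun a b => ⟨fun h => h.mono hle, fun h => ?_⟩⟩
  refine reachable_of_forall_adj (fun u v huv => ?_) h
  by_contra hnr
  have hnadj : ¬ S.Adj u v := fun h' => hnr h'.reachable
  have hmem' : S ⊔ edge u v ∈ T := by
    rw [Finset.mem_filter]
    exact ⟨Finset.mem_univ _, sup_le hle (edge_le_of_adj huv),
      isAcyclic_sup_edge hacyc huv.ne hnr⟩
  have hcard : (S ⊔ edge u v).edgeSet.ncard = S.edgeSet.ncard + 1 := by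
    rw [edgeSet_sup, edge_edgeSet_of_ne huv.ne, Set.union_singleton,
      Set.ncard_insert_of_notMem (by rwa [mem_edgeSet]) S.edgeSet.toFinite]
  have := hSmax _ hmem'
  omega

lemma second_vertex_unique {G : SimpleGraph α} {x w z₁ z₂ : α} (W : G.Walk x w)
    (hW : W.IsPath) (h1 : s(x, z₁) ∈ W.edges) (h2 : s(x, z₂) ∈ W.edges) : z₁ = z₂ := by
  cases W with
  | nil => simp at h1
  | @cons _ y _ h Q =>
    rw [Walk.cons_isPath_iff] at hW
    rw [Walk.edges_cons, List.mem_cons] at h1 h2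
    have key : ∀ z, s(x, z) = s(x, y) ∨ s(x, z) ∈ Q.edges → z = y := by
      intro z hz
      rcases hz with hz | hz
      · rcases Sym2.eq_iff.mp hz with ⟨-, rfl⟩ | ⟨hxy, rfl⟩
        · rfl
        · exact absurd hxy.symm h.ne'
      · exact absurd (Walk.fst_mem_support_of_mem_edges Q hz) hW.2
    exact (key _ h1).trans (key _ h2).symm

lemma exists_low_deg [Fintype α] {G : SimpleGraph α} (hG : G.IsAcyclic) (Q : α → Prop)
    (P : α → α → Prop) (hPQ : ∀ x z, P x z → G.Adj x z ∧ Q z)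
    {e f1 : α} (hadj : G.Adj e f1) (hQf1 : Q f1) :
    ∃ x, Q x ∧ G.Reachable e x ∧ x ≠ e ∧ ∀ z₁ z₂, P x z₁ → P x z₂ → z₁ = z₂ := by
  classical
  let 𝒩 : Finset ℕ := (Finset.range (Fintype.card α)).filter
    (fun n => ∃ y, Q y ∧ y ≠ e ∧ ∃ p : G.Walk e y, p.IsPath ∧ p.length = n)
  have h1 : (1 : ℕ) ∈ 𝒩 := by
    rw [Finset.mem_filter, Finset.mem_range]
    refine ⟨Fintype.one_lt_card_iff.mpr ⟨e, f1, hadj.ne⟩, f1, hQf1, hadj.ne', ?_⟩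
    exact ⟨Walk.cons hadj Walk.nil, by simp [hadj.ne], by simp⟩
  have hne : 𝒩.Nonempty := ⟨1, h1⟩
  set n₀ := 𝒩.max' hne with hn₀
  have hn₀mem := 𝒩.max'_mem hne
  rw [Finset.mem_filter] at hn₀mem
  obtain ⟨-, x, hQx, hxe, p, hp, hlen⟩ := hn₀mem
  refine ⟨x, hQx, ⟨p⟩, hxe, ?_⟩
  have key : ∀ z, P x z → s(x, z) ∈ p.edges := by
    intro z hz
    obtain ⟨hzadj, hQz⟩ := hPQ x z hz
    by_cases hzs : z ∈ p.support
    · have hR : ¬ (Walk.cons hzadj (p.dropUntil z hzs)).IsCycle := hG _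
      rw [Walk.cons_isCycle_iff] at hR
      push_neg at hR
      exact Walk.edges_dropUntil_subset p hzs (hR (hp.dropUntil hzs))
    · exfalso
      have hp' : (p.concat hzadj).IsPath := by
        rw [← Walk.isPath_reverse_iff, Walk.reverse_concat, Walk.cons_isPath_iff]
        refine ⟨Walk.isPath_reverse_iff _ |>.mpr hp, ?_⟩
        rw [Walk.support_reverse, List.mem_reverse]
        exact hzs
      have hze : z ≠ e := by
        rintro rfl
        exact hzs p.start_mem_support
      have hmem : n₀ + 1 ∈ 𝒩 := by
        rw [Finset.mem_filter, Finset.mem_range]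
        refine ⟨?_, z, hQz, hze, p.concat hzadj, hp', by simp [Walk.length_concat, hlen, hn₀]⟩
        have := hp'.length_lt
        rw [Walk.length_concat, hlen] at this
        exact this
      have := 𝒩.le_max' _ hmem
      omega
  intro z₁ z₂ hz₁ hz₂
  refine second_vertex_unique p.reverse (p.isPath_reverse_iff.mpr hp) ?_ ?_ <;>
    rw [Walk.edges_reverse, List.mem_reverse]
  · exact key _ hz₁
  · exact key _ hz₂

lemma interWt_mk (a b : Finset V) : interWt s(a, b) = (a ∩ b).card := rfl

lemma fweight_swap {S₁ S₂ : SimpleGraph (Finset V)} {a b : Sym2 (Finset V)}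
    (ha : a ∈ S₁.edgeSet) (hb : b ∉ S₁.edgeSet)
    (hE : S₂.edgeSet = (S₁.edgeSet \ {a}) ∪ {b}) :
    fweight S₂ + interWt a = fweight S₁ + interWt b := by
  classical
  have hF : (Set.toFinite S₂.edgeSet).toFinset
      = insert b ((Set.toFinite S₁.edgeSet).toFinset.erase a) := by
    ext p
    simp only [Set.Finite.mem_toFinset, hE, Set.mem_union, Set.mem_diff,
      Set.mem_singleton_iff, Finset.mem_insert, Finset.mem_erase]
    tauto
  have hbmem : b ∉ (Set.toFinite S₁.edgeSet).toFinset.erase a := by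
    simp only [Finset.mem_erase, Set.Finite.mem_toFinset]
    exact fun h => hb h.2
  have h2 : ∑ p ∈ (Set.toFinite S₁.edgeSet).toFinset.erase a, interWt p + interWt a
      = fweight S₁ :=
    Finset.sum_erase_add _ _ (by simpa [Set.Finite.mem_toFinset] using ha)
  rw [fweight, hF, Finset.sum_insert hbmem]
  omega

noncomputable def ddeg (S : SimpleGraph (Finset V)) (g A : Finset V) : ℕ :=
  {h | S.Adj g h ∧ g ∩ h = A}.ncard

noncomputable def phi (S : SimpleGraph (Finset V)) : ℕ :=
  ∑ g : Finset V, ∑ A ∈ g.powerset, (ddeg S g A - 2)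

lemma star_of_min (E : Finset (Finset V)) (S : SimpleGraph (Finset V))
    (hSF : IsSpanningForest (wg E) S)
    (hmax : ∀ S', IsSpanningForest (wg E) S' → fweight S' ≤ fweight S)
    (hmin : ∀ S', IsSpanningForest (wg E) S' → fweight S' = fweight S → phi S ≤ phi S') :
    InvariantStar E S := by
  classical
  obtain ⟨hle, hacyc, hreach⟩ := hSF
  intro e heE A hAne hAsub
  by_contra hbig
  push_neg at hbig
  have hbig' : 2 < ddeg S e A := hbig
  have hsfin : {f : Finset V | S.Adj e f ∧ e ∩ f = A}.Finite := Set.toFinite _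
  have h3 : 3 ≤ hsfin.toFinset.card := by
    rw [← Set.ncard_eq_toFinset_card _ hsfin]
    omega
  obtain ⟨t, hts, ht3⟩ := Finset.exists_subset_card_eq h3
  rw [Finset.card_eq_three] at ht3
  obtain ⟨f1, f2, f3, h12, h13, h23, rfl⟩ := ht3
  have hf1' := hts (by simp : f1 ∈ ({f1, f2, f3} : Finset (Finset V)))
  have hf3' := hts (by simp : f3 ∈ ({f1, f2, f3} : Finset (Finset V)))
  rw [Set.Finite.mem_toFinset, Set.mem_setOf_eq] at hf1' hf3'
  obtain ⟨hadj1, hA1⟩ := hf1'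
  obtain ⟨hadj3, hA3⟩ := hf3'
  have he3 : e ≠ f3 := hadj3.ne
  set S'' := S \ fromEdgeSet {s(e, f3)} with hS''def
  have hS''adj : ∀ u v, S''.Adj u v ↔ S.Adj u v ∧ s(u, v) ≠ s(e, f3) := by
    intro u v
    rw [hS''def, sdiff_adj, fromEdgeSet_adj]
    constructor
    · rintro ⟨h1, h2⟩
      exact ⟨h1, fun hc => h2 ⟨by simp [hc], h1.ne⟩⟩
    · rintro ⟨h1, h2⟩
      exact ⟨h1, fun hc => h2 (by simpa using hc.1)⟩
  have hbr : ¬ S''.Reachable e f3 := by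
    have hb := (isAcyclic_iff_forall_adj_isBridge.mp hacyc) hadj3
    rw [isBridge_iff] at hb
    exact hb
  have hS''ef1 : S''.Adj e f1 := by
    rw [hS''adj]
    refine ⟨hadj1, fun hc => ?_⟩
    rcases Sym2.eq_iff.mp hc with ⟨-, h⟩ | ⟨h, -⟩
    · exact h13 h
    · exact he3 h
  obtain ⟨x, hAx, hrx, hxe, huniq⟩ := exists_low_deg (isAcyclic_mono sdiff_le hacyc)
      (fun y => A ⊆ y) (fun x z => S''.Adj x z ∧ x ∩ z = A)
      (fun x z hz => ⟨hz.1, hz.2 ▸ Finset.inter_subset_right⟩) hS''ef1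
      (hA1 ▸ Finset.inter_subset_right)
  have hxf3 : x ≠ f3 := by rintro rfl; exact hbr hrx
  have hnadjxf3 : ¬ S.Adj x f3 := by
    intro h
    have hx3 : S''.Adj x f3 := by
      rw [hS''adj]
      refine ⟨h, fun hc => ?_⟩
      rcases Sym2.eq_iff.mp hc with ⟨h', -⟩ | ⟨h', -⟩
      · exact hxe h'
      · exact hxf3 h'
    exact hbr (hrx.trans hx3.reachable)
  have hxE : x ∈ E := by
    have hex : ∃ y, S''.Adj x y := by
      obtain ⟨q⟩ := hrx.symm
      cases q with
      | nil => exact absurd rfl hxe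
      | cons h _ => exact ⟨_, h⟩
    obtain ⟨y, hy⟩ := hex
    exact (show x ∈ E ∧ y ∈ E ∧ x ≠ y ∧ (x ∩ y).Nonempty from hle ((hS''adj x y).mp hy).1).1
  have hAf3 : A ⊆ f3 := hA3 ▸ Finset.inter_subset_right
  have hsubxf3 : A ⊆ x ∩ f3 := Finset.subset_inter hAx hAf3
  have hwgxf3 : (wg E).Adj x f3 :=
    show x ∈ E ∧ f3 ∈ E ∧ x ≠ f3 ∧ (x ∩ f3).Nonempty from
    ⟨hxE, (show e ∈ E ∧ f3 ∈ E ∧ e ≠ f3 ∧ (e ∩ f3).Nonempty from hle hadj3).2.1, hxf3, hAne.mono hsubxf3⟩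
  set S' := S'' ⊔ edge x f3 with hS'def
  have hS'adj : ∀ u v, S'.Adj u v ↔
      (S.Adj u v ∧ s(u, v) ≠ s(e, f3)) ∨ (u = x ∧ v = f3) ∨ (u = f3 ∧ v = x) := by
    intro u v
    rw [hS'def, sup_adj, hS''adj, edge_adj]
    constructor
    · rintro (h | ⟨h, -⟩)
      · exact Or.inl h
      · exact Or.inr h
    · rintro (h | h)
      · exact Or.inl h
      · refine Or.inr ⟨h, ?_⟩
        rcases h with ⟨rfl, rfl⟩ | ⟨rfl, rfl⟩
        · exact hxf3
        · exact Ne.symm hxf3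
  have hacyc' : S'.IsAcyclic :=
    isAcyclic_sup_edge (isAcyclic_mono sdiff_le hacyc) hxf3 (fun h => hbr (hrx.trans h))
  have hle' : S' ≤ wg E := sup_le (le_trans sdiff_le hle) (edge_le_of_adj hwgxf3)
  have hreach' : ∀ a b, S'.Reachable a b ↔ S.Reachable a b := by
    intro a b
    constructor
    · refine reachable_of_forall_adj (fun u v huv => ?_)
      rcases (hS'adj u v).mp huv with ⟨h, -⟩ | ⟨rfl, rfl⟩ | ⟨rfl, rfl⟩
      · exact h.reachable
      · exact (hrx.mono sdiff_le).symm.trans hadj3.reachable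
      · exact hadj3.reachable.symm.trans (hrx.mono sdiff_le)
    · refine reachable_of_forall_adj (fun u v huv => ?_)
      by_cases hc : s(u, v) = s(e, f3)
      · have hexf3 : S'.Reachable e f3 :=
          (hrx.mono le_sup_left).trans
            ((hS'adj x f3).mpr (Or.inr (Or.inl ⟨rfl, rfl⟩))).reachable
        rcases Sym2.eq_iff.mp hc with ⟨rfl, rfl⟩ | ⟨rfl, rfl⟩
        · exact hexf3
        · exact hexf3.symm
      · exact ((hS'adj u v).mpr (Or.inl ⟨huv, hc⟩)).reachable
  have hSF' : IsSpanningForest (wg E) S' :=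
    ⟨hle', hacyc', fun a b => (hreach' a b).trans (hreach a b)⟩
  have hES' : S'.edgeSet = (S.edgeSet \ {s(e, f3)}) ∪ {s(x, f3)} := by
    have h1 : (fromEdgeSet {s(e, f3)} : SimpleGraph (Finset V)) = edge e f3 := rfl
    rw [hS'def, edgeSet_sup, hS''def, edgeSet_sdiff, h1,
      edge_edgeSet_of_ne he3, edge_edgeSet_of_ne hxf3]
  have hsw := fweight_swap (a := s(e, f3)) (b := s(x, f3))
    (S.mem_edgeSet.mpr hadj3) (fun h => hnadjxf3 (S.mem_edgeSet.mp h)) hES'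
  have hcard_le : A.card ≤ (x ∩ f3).card := Finset.card_le_card hsubxf3
  have hwle : fweight S' ≤ fweight S := hmax S' hSF'
  have hia : interWt s(e, f3) = A.card := by rw [interWt_mk, hA3]
  have hib : interWt s(x, f3) = (x ∩ f3).card := interWt_mk x f3
  have hAxf3 : x ∩ f3 = A := by
    refine (Finset.eq_of_subset_of_card_le hsubxf3 ?_).symm
    omega
  have hfw_eq : fweight S' = fweight S := by
    rw [hia, hib, hAxf3] at hsw
    omega
  -- adjacency descriptions at the four kinds of nodes
  have hadj_e : ∀ h, S'.Adj e h ↔ (S.Adj e h ∧ h ≠ f3) := by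
    intro h
    rw [hS'adj]
    constructor
    · rintro (⟨h1, h2⟩ | ⟨hex', -⟩ | ⟨hef3, -⟩)
      · exact ⟨h1, fun hc => h2 (by rw [hc])⟩
      · exact absurd hex'.symm hxe
      · exact absurd hef3 he3
    · rintro ⟨h1, h2⟩
      refine Or.inl ⟨h1, fun hc => ?_⟩
      rcases Sym2.eq_iff.mp hc with ⟨-, h'⟩ | ⟨h', -⟩
      · exact h2 h'
      · exact he3 h'
  have hfib_e_ne : ∀ A', A' ≠ A →
      ({h | S'.Adj e h ∧ e ∩ h = A'} : Set (Finset V)) = {h | S.Adj e h ∧ e ∩ h = A'} := by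
    intro A' hA'
    ext h
    simp only [Set.mem_setOf_eq, hadj_e]
    constructor
    · rintro ⟨⟨h1, -⟩, h2⟩
      exact ⟨h1, h2⟩
    · rintro ⟨h1, h2⟩
      refine ⟨⟨h1, fun hh => ?_⟩, h2⟩
      subst hh
      exact hA' (by rw [← h2, hA3])
  have hfib_e_A : ({h | S'.Adj e h ∧ e ∩ h = A} : Set (Finset V))
      = {h | S.Adj e h ∧ e ∩ h = A} \ {f3} := by
    ext h
    simp only [Set.mem_setOf_eq, hadj_e, Set.mem_diff, Set.mem_singleton_iff]
    tauto
  have hddeg_e_A : ddeg S' e A = ddeg S e A - 1 := by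
    rw [ddeg, ddeg, hfib_e_A,
      Set.ncard_diff_singleton_of_mem
        (show f3 ∈ {h | S.Adj e h ∧ e ∩ h = A} from ⟨hadj3, hA3⟩)]
  have hadj_other : ∀ g, g ≠ e → g ≠ f3 → g ≠ x → ∀ h, S'.Adj g h ↔ S.Adj g h := by
    intro g hge hgf3 hgx h
    rw [hS'adj]
    constructor
    · rintro (⟨h1, -⟩ | ⟨h', -⟩ | ⟨h', -⟩)
      · exact h1
      · exact absurd h' hgx
      · exact absurd h' hgf3
    · intro h1
      refine Or.inl ⟨h1, fun hc => ?_⟩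
      rcases Sym2.eq_iff.mp hc with ⟨h', -⟩ | ⟨h', -⟩
      · exact hge h'
      · exact hgf3 h'
  have hadj_f3 : ∀ h, S'.Adj f3 h ↔ ((S.Adj f3 h ∧ h ≠ e) ∨ h = x) := by
    intro h
    rw [hS'adj]
    constructor
    · rintro (⟨h1, h2⟩ | ⟨h', -⟩ | ⟨-, rfl⟩)
      · refine Or.inl ⟨h1, fun hh => ?_⟩
        subst hh
        exact h2 Sym2.eq_swap
      · exact absurd h' (Ne.symm hxf3)
      · exact Or.inr rfl
    · rintro (⟨h1, h2⟩ | rfl)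
      · refine Or.inl ⟨h1, fun hc => ?_⟩
        rcases Sym2.eq_iff.mp hc with ⟨h', -⟩ | ⟨-, h'⟩
        · exact he3 h'.symm
        · exact h2 h'
      · exact Or.inr (Or.inr ⟨rfl, rfl⟩)
  have hfib_f3_ne : ∀ A', A' ≠ A →
      ({h | S'.Adj f3 h ∧ f3 ∩ h = A'} : Set (Finset V)) = {h | S.Adj f3 h ∧ f3 ∩ h = A'} := by
    intro A' hA'
    ext h
    simp only [Set.mem_setOf_eq, hadj_f3]
    constructor
    · rintro ⟨(⟨h1, -⟩ | rfl), h2⟩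
      · exact ⟨h1, h2⟩
      · refine absurd ?_ hA'
        rw [← h2, Finset.inter_comm]
        exact hAxf3
    · rintro ⟨h1, h2⟩
      refine ⟨Or.inl ⟨h1, fun hh => ?_⟩, h2⟩
      subst hh
      exact hA' (by rw [← h2, Finset.inter_comm, hA3])
  have hfib_f3_A : ({h | S'.Adj f3 h ∧ f3 ∩ h = A} : Set (Finset V))
      = insert x ({h | S.Adj f3 h ∧ f3 ∩ h = A} \ {e}) := by
    ext h
    simp only [Set.mem_setOf_eq, hadj_f3, Set.mem_insert_iff, Set.mem_diff,
      Set.mem_singleton_iff]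
    constructor
    · rintro ⟨(⟨h1, h2⟩ | rfl), h3⟩
      · exact Or.inr ⟨⟨h1, h3⟩, h2⟩
      · exact Or.inl rfl
    · rintro (rfl | ⟨⟨h1, h2⟩, h3⟩)
      · exact ⟨Or.inr rfl, by rw [Finset.inter_comm]; exact hAxf3⟩
      · exact ⟨Or.inl ⟨h1, h3⟩, h2⟩
  have hddeg_f3 : ∀ A', ddeg S' f3 A' = ddeg S f3 A' := by
    intro A'
    by_cases hA' : A' = A
    · rw [hA']
      rw [ddeg, ddeg, hfib_f3_A]
      have hemem : e ∈ ({h | S.Adj f3 h ∧ f3 ∩ h = A} : Set (Finset V)) :=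
        ⟨hadj3.symm, by rw [Finset.inter_comm]; exact hA3⟩
      have hxnot : x ∉ ({h | S.Adj f3 h ∧ f3 ∩ h = A} : Set (Finset V)) \ {e} := by
        rintro ⟨⟨h1, -⟩, -⟩
        exact hnadjxf3 h1.symm
      rw [Set.ncard_insert_of_notMem hxnot (Set.toFinite _),
        Set.ncard_diff_singleton_of_mem hemem]
      have hpos : 0 < ({h | S.Adj f3 h ∧ f3 ∩ h = A} : Set (Finset V)).ncard :=
        (Set.ncard_pos (Set.toFinite _)).mpr ⟨e, hemem⟩
      omega
    · rw [ddeg, ddeg, hfib_f3_ne A' hA']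
  have hadj_x : ∀ h, S'.Adj x h ↔ (S.Adj x h ∨ h = f3) := by
    intro h
    rw [hS'adj]
    constructor
    · rintro (⟨h1, -⟩ | ⟨-, rfl⟩ | ⟨h', -⟩)
      · exact Or.inl h1
      · exact Or.inr rfl
      · exact absurd h' hxf3
    · rintro (h1 | rfl)
      · refine Or.inl ⟨h1, fun hc => ?_⟩
        rcases Sym2.eq_iff.mp hc with ⟨h', -⟩ | ⟨h', -⟩
        · exact hxe h'
        · exact hxf3 h'
      · exact Or.inr (Or.inl ⟨rfl, rfl⟩)
  have hfib_x_ne : ∀ A', A' ≠ A →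
      ({h | S'.Adj x h ∧ x ∩ h = A'} : Set (Finset V)) = {h | S.Adj x h ∧ x ∩ h = A'} := by
    intro A' hA'
    ext h
    simp only [Set.mem_setOf_eq, hadj_x]
    constructor
    · rintro ⟨(h1 | rfl), h2⟩
      · exact ⟨h1, h2⟩
      · exact absurd (by rw [← h2]; exact hAxf3) hA'
    · rintro ⟨h1, h2⟩
      exact ⟨Or.inl h1, h2⟩
  have hfib_x_A : ({h | S'.Adj x h ∧ x ∩ h = A} : Set (Finset V))
      = insert f3 {h | S.Adj x h ∧ x ∩ h = A} := by
    ext h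
    simp only [Set.mem_setOf_eq, hadj_x, Set.mem_insert_iff]
    constructor
    · rintro ⟨(h1 | rfl), h2⟩
      · exact Or.inr ⟨h1, h2⟩
      · exact Or.inl rfl
    · rintro (rfl | ⟨h1, h2⟩)
      · exact ⟨Or.inr rfl, hAxf3⟩
      · exact ⟨Or.inl h1, h2⟩
  have hd_x : ({h | S.Adj x h ∧ x ∩ h = A} : Set (Finset V)).ncard ≤ 1 := by
    by_cases hempty : ({h | S.Adj x h ∧ x ∩ h = A} : Set (Finset V)) = ∅
    · rw [hempty]
      simp
    · obtain ⟨z, hz⟩ := Set.nonempty_iff_ne_empty.mpr hempty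
      have hP : ∀ u, S.Adj x u ∧ x ∩ u = A → S''.Adj x u ∧ x ∩ u = A := by
        rintro u ⟨hu1, hu2⟩
        refine ⟨(hS''adj x u).mpr ⟨hu1, fun hc => ?_⟩, hu2⟩
        rcases Sym2.eq_iff.mp hc with ⟨h', -⟩ | ⟨h', -⟩
        · exact hxe h'
        · exact hxf3 h'
      have hsub : ({h | S.Adj x h ∧ x ∩ h = A} : Set (Finset V)) ⊆ {z} := by
        intro w hw
        simp only [Set.mem_singleton_iff]
        exact huniq _ _ (hP w hw) (hP z hz)
      exact le_trans (Set.ncard_le_ncard hsub (Set.finite_singleton z)) (by simp)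
  have hddeg_x : ∀ A', (ddeg S' x A' - 2) = (ddeg S x A' - 2) := by
    intro A'
    by_cases hA' : A' = A
    · rw [hA']
      have hf3not : f3 ∉ ({h | S.Adj x h ∧ x ∩ h = A} : Set (Finset V)) :=
        fun h => hnadjxf3 h.1
      rw [ddeg, ddeg, hfib_x_A, Set.ncard_insert_of_notMem hf3not (Set.toFinite _)]
      omega
    · rw [ddeg, ddeg, hfib_x_ne A' hA']
  have he_term : ∀ A' ∈ e.powerset, ddeg S' e A' - 2 ≤ ddeg S e A' - 2 := by
    intro A' _
    by_cases hA' : A' = A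
    · rw [hA', hddeg_e_A]
      omega
    · rw [ddeg, ddeg, hfib_e_ne A' hA']
  have hphi : phi S' < phi S := by
    rw [phi, phi]
    refine Finset.sum_lt_sum (fun g _ => ?_) ⟨e, Finset.mem_univ e, ?_⟩
    · by_cases hge : g = e
      · subst hge
        exact Finset.sum_le_sum he_term
      · by_cases hgf3 : g = f3
        · subst hgf3
          exact le_of_eq (Finset.sum_congr rfl (fun A' _ => by rw [hddeg_f3]))
        · by_cases hgx : g = x
          · subst hgx
            exact le_of_eq (Finset.sum_congr rfl (fun A' _ => hddeg_x A'))
          · refine le_of_eq (Finset.sum_congr rfl (fun A' _ => ?_))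
            have : ({h | S'.Adj g h ∧ g ∩ h = A'} : Set (Finset V))
                = {h | S.Adj g h ∧ g ∩ h = A'} := by
              ext h
              simp only [Set.mem_setOf_eq, hadj_other g hge hgf3 hgx]
            rw [ddeg, ddeg, this]
    · refine Finset.sum_lt_sum he_term ⟨A, Finset.mem_powerset.mpr hAsub, ?_⟩
      rw [hddeg_e_A]
      omega
  have := hmin S' hSF' hfw_eq
  omega


lemma degree_bound (E : Finset (Finset V)) (S : SimpleGraph (Finset V))
    (hle : S ≤ wg E) (hstar : InvariantStar E S) :
    ∀ e ∈ E, {f : Finset V | S.Adj e f}.ncard ≤ 2 * (2 ^ e.card - 1) := by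
  classical
  intro e heE
  have hconv : {f : Finset V | S.Adj e f}.ncard
      = (Finset.univ.filter (fun f => S.Adj e f)).card := by
    rw [Set.ncard_eq_toFinset_card']
    congr 1
    ext f
    simp
  rw [hconv]
  set N := Finset.univ.filter (fun f => S.Adj e f) with hN
  have hmap : ∀ f ∈ N, e ∩ f ∈ (e.powerset).erase ∅ := by
    intro f hf
    rw [hN, Finset.mem_filter] at hf
    have hwadj : e ∈ E ∧ f ∈ E ∧ e ≠ f ∧ (e ∩ f).Nonempty := hle hf.2
    rw [Finset.mem_erase, Finset.mem_powerset]
    exact ⟨(hwadj.2.2.2).ne_empty, Finset.inter_subset_left⟩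
  rw [Finset.card_eq_sum_card_fiberwise hmap]
  have hbound : ∀ A ∈ e.powerset.erase ∅, (N.filter (fun f => e ∩ f = A)).card ≤ 2 := by
    intro A hA
    rw [Finset.mem_erase, Finset.mem_powerset] at hA
    have hstar' := hstar e heE A (Finset.nonempty_iff_ne_empty.mpr hA.1) hA.2
    have hcc : (N.filter (fun f => e ∩ f = A)).card
        = ({f : Finset V | S.Adj e f ∧ e ∩ f = A}).ncard := by
      rw [Set.ncard_eq_toFinset_card']
      congr 1
      ext f
      simp [hN, Finset.mem_filter]
    omega
  calc ∑ A ∈ e.powerset.erase ∅, (N.filter fun f => e ∩ f = A).card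
      ≤ ∑ _A ∈ e.powerset.erase ∅, 2 := Finset.sum_le_sum hbound
    _ = 2 * (2 ^ e.card - 1) := by
        rw [Finset.sum_const, smul_eq_mul,
          Finset.card_erase_of_mem (Finset.empty_mem_powerset e), Finset.card_powerset,
          mul_comm]

end BGAux

/-- Every hypergraph has a maximum-weight spanning forest of its weighted hyperedge
graph satisfying Invariant (★); consequently, in such a forest every node `e` has
degree at most `2 * (2 ^ |e| - 1)`. -/
theorem exists_maxSpanningForest_invariantStar (E : Finset (Finset V)) :
    ∃ S, IsMaxSpanningForest (wg E) S ∧ InvariantStar E S ∧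
      ∀ e ∈ E, {f : Finset V | S.Adj e f}.ncard ≤ 2 * (2 ^ e.card - 1) := by
  classical
  obtain ⟨S₀, h1, h2, h3⟩ := BGAux.exists_spanning_forest' (wg E)
  have hS₀ : IsSpanningForest (wg E) S₀ := ⟨h1, h2, h3⟩
  let T1 : Finset (SimpleGraph (Finset V)) :=
    Finset.univ.filter (fun S => IsSpanningForest (wg E) S)
  have hT1 : S₀ ∈ T1 := by simp [T1, hS₀]
  obtain ⟨S₁, hS₁mem, hS₁max⟩ := T1.exists_max_image fweight ⟨S₀, hT1⟩
  let T2 := T1.filter (fun S => fweight S = fweight S₁)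
  have hT2 : S₁ ∈ T2 := by simp [T2, hS₁mem]
  obtain ⟨S, hSmem, hSmin⟩ := T2.exists_min_image BGAux.phi ⟨S₁, hT2⟩
  simp only [T2, T1, Finset.mem_filter, Finset.mem_univ, true_and] at hSmem
  obtain ⟨hSF, hfw⟩ := hSmem
  have hmax : ∀ S', IsSpanningForest (wg E) S' → fweight S' ≤ fweight S := by
    intro S' hS'
    rw [hfw]
    exact hS₁max S' (by simp only [T1, Finset.mem_filter, Finset.mem_univ, true_and]; exact hS')
  have hmin : ∀ S', IsSpanningForest (wg E) S' → fweight S' = fweight S →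
      BGAux.phi S ≤ BGAux.phi S' := by
    intro S' hS' hfw'
    refine hSmin S' ?_
    simp only [T2, T1, Finset.mem_filter, Finset.mem_univ, true_and]
    exact ⟨hS', by rw [hfw', hfw]⟩
  have hstar := BGAux.star_of_min E S hSF hmax hmin
  exact ⟨S, ⟨hSF, hmax⟩, hstar, BGAux.degree_bound E S hSF.1 hstar⟩
end

section
/- (Insertion step of Theorem 3.2) Let H = (V, E) be a hypergraph, let e ⊆ V with e ∉ E, and let S be a maximum-weight spanning forest of wg(H) satisfying Invariant (★). Then there exists a maximum-weight spanning forest S' of wg((V, E ∪ {e})) satisfying Invariant (★) such that every edge of S' \ S is incident to the node e and the symmetric difference of S and S' contains at most 2·(2^{|e|} − 1) edges. -/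
/-!
Lemma 3.1(a) (Bernstein–Goodman): a hypergraph `H` is acyclic iff the weight `w(H)`
equals the weight of a maximum-weight spanning forest of the weighted hyperedge
graph `wg(H)`.

A hypergraph on a finite vertex type `V` is given by its finite set `E` of
hyperedges, each a `Finset V`.
-/

variable {V : Type*} [Fintype V] [DecidableEq V]

attribute [reducible] wg

/-! ### Auxiliary machinery -/

section GraphHelpers

open SimpleGraph

variable {α : Type*}

lemma edge_le_of_adj {H : SimpleGraph α} {c d : α} (h : H.Adj c d) : edge c d ≤ H := by
  intro x y hxy
  rw [edge_adj] at hxy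
  rcases hxy.1 with ⟨rfl, rfl⟩ | ⟨rfl, rfl⟩
  · exact h
  · exact h.symm

lemma acyclic_mono_s11 {F H : SimpleGraph α} (hle : F ≤ H) (hH : H.IsAcyclic) : F.IsAcyclic := by
  intro v c hc
  exact hH ((c.mapLe hle)) (((Walk.map_isCycle_iff_of_injective (fun a b h => h)).2 hc))

lemma reachable_sup_edge_iff {F : SimpleGraph α} {a b u v : α} :
    (F ⊔ edge a b).Reachable u v ↔ F.Reachable u v ∨
      (F.Reachable u a ∧ F.Reachable b v) ∨ (F.Reachable u b ∧ F.Reachable a v) := by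
  constructor
  · rintro ⟨w⟩
    induction w with
    | nil => exact Or.inl (Reachable.refl _)
    | @cons x m y h p ih =>
      rcases ih with h1 | ⟨h2a, h2b⟩ | ⟨h3a, h3b⟩ <;>
      · rw [sup_adj, edge_adj] at h
        rcases h with h | ⟨(⟨rfl, rfl⟩ | ⟨rfl, rfl⟩), hne⟩
        · first
          | exact Or.inl ((Adj.reachable h).trans h1)
          | exact Or.inr (Or.inl ⟨(Adj.reachable h).trans h2a, h2b⟩)
          | exact Or.inr (Or.inr ⟨(Adj.reachable h).trans h3a, h3b⟩)
        all_goals first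
          | exact Or.inr (Or.inl ⟨Reachable.refl _, h1⟩)
          | exact Or.inr (Or.inr ⟨Reachable.refl _, h1⟩)
          | exact Or.inr (Or.inl ⟨Reachable.refl _, h2b⟩)
          | exact Or.inr (Or.inr ⟨Reachable.refl _, h2b⟩)
          | exact Or.inr (Or.inl ⟨Reachable.refl _, h3b⟩)
          | exact Or.inr (Or.inr ⟨Reachable.refl _, h3b⟩)
          | exact Or.inl h2b
          | exact Or.inl h3b
          | exact Or.inl ((h2a.symm).trans h2b)
          | exact Or.inl ((h3a.symm).trans h3b)
  · intro h
    have hlift : ∀ {x y : α}, F.Reachable x y → (F ⊔ edge a b).Reachable x y :=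
      fun h => h.mono le_sup_left
    rcases h with h1 | ⟨h2a, h2b⟩ | ⟨h3a, h3b⟩
    · exact hlift h1
    · by_cases hab : a = b
      · subst hab; exact (hlift h2a).trans (hlift h2b)
      · exact ((hlift h2a).trans (Adj.reachable (by
          rw [sup_adj, edge_adj]; exact Or.inr ⟨Or.inl ⟨rfl, rfl⟩, hab⟩))).trans (hlift h2b)
    · by_cases hab : a = b
      · subst hab; exact (hlift h3a).trans (hlift h3b)
      · exact ((hlift h3a).trans (Adj.reachable (by
          rw [sup_adj, edge_adj]
          exact Or.inr ⟨Or.inr ⟨rfl, rfl⟩, Ne.symm hab⟩))).trans (hlift h3b)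

lemma reachable_delete_edge {F : SimpleGraph α} {a b u v : α}
    (h : F.Reachable u v) :
    (F.deleteEdges {s(a,b)}).Reachable u v ∨
      ((F.deleteEdges {s(a,b)}).Reachable u a ∧ (F.deleteEdges {s(a,b)}).Reachable b v) ∨
      ((F.deleteEdges {s(a,b)}).Reachable u b ∧ (F.deleteEdges {s(a,b)}).Reachable a v) := by
  obtain ⟨w⟩ := h
  induction w with
  | nil => exact Or.inl (Reachable.refl _)
  | @cons x m y h p ih =>
    by_cases hxm : s(x, m) = s(a, b)
    · rw [Sym2.eq_iff] at hxm
      rcases ih with h1 | ⟨h2a, h2b⟩ | ⟨h3a, h3b⟩ <;>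
        rcases hxm with ⟨rfl, rfl⟩ | ⟨rfl, rfl⟩ <;>
        first
          | exact Or.inr (Or.inl ⟨Reachable.refl _, h1⟩)
          | exact Or.inr (Or.inr ⟨Reachable.refl _, h1⟩)
          | exact Or.inr (Or.inl ⟨Reachable.refl _, h2b⟩)
          | exact Or.inr (Or.inr ⟨Reachable.refl _, h2b⟩)
          | exact Or.inr (Or.inl ⟨Reachable.refl _, h3b⟩)
          | exact Or.inr (Or.inr ⟨Reachable.refl _, h3b⟩)
          | exact Or.inl h2b
          | exact Or.inl h3b
          | exact Or.inl ((h2a.symm).trans h2b)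
          | exact Or.inl ((h3a.symm).trans h3b)
    · have hD : (F.deleteEdges {s(a,b)}).Adj x m := by
        rw [deleteEdges_adj]
        exact ⟨h, by simpa using hxm⟩
      rcases ih with h1 | ⟨h2a, h2b⟩ | ⟨h3a, h3b⟩
      · exact Or.inl (hD.reachable.trans h1)
      · exact Or.inr (Or.inl ⟨hD.reachable.trans h2a, h2b⟩)
      · exact Or.inr (Or.inr ⟨hD.reachable.trans h3a, h3b⟩)

lemma bridge_of_acyclic {F : SimpleGraph α} (hF : F.IsAcyclic) {a b : α} (h : F.Adj a b) :
    ¬(F.deleteEdges {s(a,b)}).Reachable a b := by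
  have := (isAcyclic_iff_forall_adj_isBridge.mp hF) h
  rw [isBridge_iff] at this
  exact this

lemma acyclic_sup_edge {F : SimpleGraph α} (hF : F.IsAcyclic) {a b : α} (hab : a ≠ b)
    (hr : ¬F.Reachable a b) : (F ⊔ edge a b).IsAcyclic := by
  rw [isAcyclic_iff_forall_adj_isBridge]
  intro u v huv
  rw [isBridge_iff]
  rw [sup_adj] at huv
  have hFnadj : ¬ F.Adj a b := fun h => hr h.reachable
  rcases huv with hF' | hedge
  · have hne : s(u,v) ≠ s(a,b) := by
      intro hcon
      rcases Sym2.eq_iff.mp hcon with ⟨rfl, rfl⟩ | ⟨rfl, rfl⟩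
      · exact hFnadj hF'
      · exact hFnadj hF'.symm
    have hgraph : (F ⊔ edge a b).deleteEdges {s(u,v)} = (F.deleteEdges {s(u,v)}) ⊔ edge a b := by
      ext x y
      simp only [deleteEdges_adj, sup_adj, Set.mem_singleton_iff]
      constructor
      · rintro ⟨hF2 | he, hne2⟩
        · exact Or.inl ⟨hF2, hne2⟩
        · exact Or.inr he
      · rintro (⟨hF2, hne2⟩ | he)
        · exact ⟨Or.inl hF2, hne2⟩
        · refine ⟨Or.inr he, ?_⟩
          rw [edge_adj] at he
          intro hcon
          apply hne
          rw [← hcon]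
          rcases he.1 with ⟨rfl, rfl⟩ | ⟨rfl, rfl⟩
          · rfl
          · exact Sym2.eq_swap
    rw [hgraph]
    intro hreach
    rcases reachable_sup_edge_iff.mp hreach with h1 | ⟨h2a, h2b⟩ | ⟨h3a, h3b⟩
    · exact bridge_of_acyclic hF hF' h1
    · exact hr (((h2a.mono (deleteEdges_le _)).symm.trans hF'.reachable).trans
        (h2b.mono (deleteEdges_le _)).symm)
    · exact hr (((h3b.mono (deleteEdges_le _)).trans hF'.reachable.symm).trans
        (h3a.mono (deleteEdges_le _)))
  · rw [edge_adj] at hedge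
    have hXle : (F ⊔ edge a b).deleteEdges {s(u,v)} ≤ F := by
      intro x y hxy
      rw [deleteEdges_adj, sup_adj] at hxy
      rcases hxy.1 with h | h
      · exact h
      · exfalso
        apply hxy.2
        rw [edge_adj] at h
        rw [Set.mem_singleton_iff, Sym2.eq_iff]
        rcases h.1 with ⟨rfl, rfl⟩ | ⟨rfl, rfl⟩
        · rcases hedge.1 with ⟨rfl, rfl⟩ | ⟨rfl, rfl⟩
          · exact Or.inl ⟨rfl, rfl⟩
          · exact Or.inr ⟨rfl, rfl⟩
        · rcases hedge.1 with ⟨rfl, rfl⟩ | ⟨rfl, rfl⟩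
          · exact Or.inr ⟨rfl, rfl⟩
          · exact Or.inl ⟨rfl, rfl⟩
    intro hreach
    have : F.Reachable u v := (hreach.mono hXle)
    rcases hedge.1 with ⟨rfl, rfl⟩ | ⟨rfl, rfl⟩
    · exact hr this
    · exact hr this.symm

lemma edgeSet_sup_edge {F : SimpleGraph α} {a b : α} (hab : a ≠ b) :
    (F ⊔ edge a b).edgeSet = insert s(a,b) F.edgeSet := by
  rw [edgeSet_sup, edge_edgeSet_of_ne hab, Set.union_singleton]

lemma cross_lemma {F : SimpleGraph α} {P : α → Prop} {f g : α} (w : F.Walk f g)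
    (hw : w.IsPath) (hf : P f) (hg : ¬P g) :
    ∃ x y, F.Adj x y ∧ P x ∧ ¬P y ∧ ∃ (w1 : F.Walk f x) (w2 : F.Walk y g),
      s(x,y) ∉ w1.edges ∧ s(x,y) ∉ w2.edges := by
  induction w with
  | nil => exact absurd hf hg
  | @cons u m v h p ih =>
    by_cases hm : P m
    · obtain ⟨x, y, hxy, hPx, hPy, w1, w2, he1, he2⟩ := ih hw.of_cons hm hg
      refine ⟨x, y, hxy, hPx, hPy, Walk.cons h w1, w2, ?_, he2⟩
      rw [Walk.edges_cons]
      intro hmem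
      rcases List.mem_cons.mp hmem with hc | hc
      · rcases Sym2.eq_iff.mp hc with ⟨rfl, rfl⟩ | ⟨rfl, rfl⟩
        · exact hPy hm
        · exact hPy hf
      · exact he1 hc
    · refine ⟨u, m, h, hf, hm, Walk.nil, p, by simp, ?_⟩
      intro hmem
      exact ((Walk.cons_isPath_iff h p).mp hw).2 (p.fst_mem_support_of_mem_edges hmem)

lemma reachable_of_walk_avoiding {F : SimpleGraph α} {a b x y : α} (w : F.Walk x y)
    (hw : s(a,b) ∉ w.edges) : (F.deleteEdges {s(a,b)}).Reachable x y :=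
  ⟨w.toDeleteEdge s(a,b) hw⟩

/-- A vertex having at most one neighbour. -/
def IsLeafy (F : SimpleGraph α) (t : α) : Prop := ∀ u v, F.Adj t u → F.Adj t v → u = v

lemma exists_leafy_reachable [Fintype α] {F : SimpleGraph α} (hF : F.IsAcyclic) (g : α) :
    ∃ t, F.Reachable g t ∧ IsLeafy F t := by
  classical
  let Sn : Set ℕ := {n | ∃ t, ∃ p : F.Walk g t, p.IsPath ∧ p.length = n}
  have hne : Sn.Nonempty := ⟨0, g, Walk.nil, by simp, rfl⟩
  have hbdd : BddAbove Sn := by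
    refine ⟨Fintype.card α, ?_⟩
    rintro n ⟨t, p, hp, rfl⟩
    exact le_of_lt hp.length_lt
  obtain ⟨t, p, hp, hlen⟩ := Nat.sSup_mem hne hbdd
  refine ⟨t, ⟨p⟩, ?_⟩
  intro u v hu hv
  have key : ∀ x, F.Adj t x → x ∈ p.support := by
    intro x hx
    by_contra hxs
    have hq : (Walk.cons hx.symm p.reverse).IsPath := by
      rw [Walk.cons_isPath_iff]
      exact ⟨hp.reverse, by rwa [Walk.support_reverse, List.mem_reverse]⟩
    have hmem : p.length + 1 ∈ Sn :=
      ⟨x, (Walk.cons hx.symm p.reverse).reverse, hq.reverse, by simp⟩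
    have := le_csSup hbdd hmem
    omega
  have key2 : ∀ x, F.Adj t x → ∃ l, p.reverse.support = t :: x :: l := by
    intro x hx
    have hxs : x ∈ p.support := key x hx
    have hxt : x ≠ t := hx.ne'
    have hq : (p.dropUntil x hxs) = Walk.cons hx.symm Walk.nil := by
      have hq1 : (⟨p.dropUntil x hxs, hp.dropUntil hxs⟩ : F.Path x t)
          = ⟨Walk.cons hx.symm Walk.nil, by
              rw [Walk.cons_isPath_iff]; exact ⟨Walk.IsPath.nil, by simp [hxt]⟩⟩ :=
        hF.path_unique _ _
      exact congrArg Subtype.val hq1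
    have hpe : p = (p.takeUntil x hxs).concat hx.symm := by
      conv_lhs => rw [← p.take_spec hxs]
      rw [hq]
      rfl
    have hrev := congrArg Walk.reverse hpe
    rw [Walk.reverse_concat] at hrev
    refine ⟨(p.takeUntil x hxs).reverse.support.tail, ?_⟩
    rw [hrev, Walk.support_cons]
    congr 1
    exact (p.takeUntil x hxs).reverse.support_eq_cons
  obtain ⟨l1, h1⟩ := key2 u hu
  obtain ⟨l2, h2⟩ := key2 v hv
  rw [h1] at h2
  exact (List.cons.injEq _ _ _ _).mp ((List.cons.injEq _ _ _ _).mp h2).2 |>.1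

/-- Distance (along walks) to the nearest vertex with at most one neighbour. -/
noncomputable def leafDist (F : SimpleGraph α) (g : α) : ℕ :=
  sInf {n | ∃ t, ∃ w : F.Walk g t, IsLeafy F t ∧ w.length = n}

lemma leafDist_step [Fintype α] {F : SimpleGraph α} (hF : F.IsAcyclic) {g : α}
    (hg : ¬IsLeafy F g) :
    ∃ f, F.Adj g f ∧ leafDist F f < leafDist F g := by
  obtain ⟨t0, hr, hl⟩ := exists_leafy_reachable hF g
  have hne : {n | ∃ t, ∃ w : F.Walk g t, IsLeafy F t ∧ w.length = n}.Nonempty :=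
    ⟨_, t0, hr.some, hl, rfl⟩
  obtain ⟨t, w, hlt, hwl⟩ := Nat.sInf_mem hne
  cases w with
  | nil => exact absurd hlt hg
  | @cons _ m _ h p =>
    refine ⟨m, h, ?_⟩
    have h1 : leafDist F m ≤ p.length := Nat.sInf_le ⟨t, p, hlt, rfl⟩
    have h2 : p.length + 1 = leafDist F g := by
      rw [leafDist, ← hwl]
      simp
    omega

lemma card_cc_bot [Fintype α] :
    Nat.card (⊥ : SimpleGraph α).ConnectedComponent = Fintype.card α := by
  rw [← Nat.card_eq_fintype_card]
  refine (Nat.card_eq_of_bijective (⊥ : SimpleGraph α).connectedComponentMk ⟨?_, ?_⟩).symm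
  · intro u v h
    exact reachable_bot.mp (ConnectedComponent.eq.mp h)
  · intro C
    exact C.ind (fun v => ⟨v, rfl⟩)

lemma card_cc_deleteEdge [Fintype α] {F : SimpleGraph α} {a b : α} (hab : F.Adj a b)
    (hbr : ¬(F.deleteEdges {s(a,b)}).Reachable a b) :
    Nat.card (F.deleteEdges {s(a,b)}).ConnectedComponent
      = Nat.card F.ConnectedComponent + 1 := by
  classical
  set D := F.deleteEdges {s(a,b)} with hD
  let π : D.ConnectedComponent → F.ConnectedComponent :=
    ConnectedComponent.map (Hom.ofLE (deleteEdges_le _))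
  have hπ : ∀ v, π (D.connectedComponentMk v) = F.connectedComponentMk v := fun v => rfl
  let σ : D.ConnectedComponent → F.ConnectedComponent ⊕ Unit :=
    fun C => if C = D.connectedComponentMk b then Sum.inr () else Sum.inl (π C)
  have hinj : Function.Injective σ := by
    intro C1 C2 h
    revert h
    refine ConnectedComponent.ind₂ ?_ C1 C2
    intro u v huv
    by_cases h1 : D.connectedComponentMk u = D.connectedComponentMk b <;>
      by_cases h2 : D.connectedComponentMk v = D.connectedComponentMk b
    · rw [h1, h2]
    · simp only [σ, if_pos h1, if_neg h2] at huv
      exact absurd huv (by simp)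
    · simp only [σ, if_neg h1, if_pos h2] at huv
      exact absurd huv (by simp)
    · simp only [σ, if_neg h1, if_neg h2, Sum.inl.injEq] at huv
      rw [hπ, hπ] at huv
      have hr : F.Reachable u v := ConnectedComponent.eq.mp huv
      rcases reachable_delete_edge (a := a) (b := b) hr with hcase | ⟨_, hcase2⟩ | ⟨hcase1, _⟩
      · exact ConnectedComponent.eq.mpr hcase
      · exact absurd (ConnectedComponent.eq.mpr hcase2.symm) h2
      · exact absurd (ConnectedComponent.eq.mpr hcase1) h1
  have hsurj : Function.Surjective σ := by
    rintro (C | ⟨⟩)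
    · refine C.ind ?_
      intro v
      by_cases hv : D.connectedComponentMk v = D.connectedComponentMk b
      · refine ⟨D.connectedComponentMk a, ?_⟩
        have hna : D.connectedComponentMk a ≠ D.connectedComponentMk b :=
          fun h => hbr (ConnectedComponent.eq.mp h)
        simp only [σ, if_neg hna, hπ]
        have : F.Reachable a v :=
          hab.reachable.trans (((ConnectedComponent.eq.mp hv).mono (deleteEdges_le _)).symm)
        exact congrArg Sum.inl (ConnectedComponent.eq.mpr this)
      · exact ⟨D.connectedComponentMk v, by simp only [σ, if_neg hv, hπ]⟩
    · exact ⟨D.connectedComponentMk b, by simp [σ]⟩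
  have hcard := Nat.card_eq_of_bijective σ ⟨hinj, hsurj⟩
  rw [hcard, Nat.card_sum]
  simp

lemma forest_formula [Fintype α] {F : SimpleGraph α} (hF : F.IsAcyclic) :
    F.edgeSet.ncard + Nat.card F.ConnectedComponent = Fintype.card α := by
  classical
  generalize hn : F.edgeSet.ncard = n
  induction n using Nat.strong_induction_on generalizing F with
  | _ n ih =>
    rcases Nat.eq_zero_or_pos n with rfl | hpos
    · have hemp : F.edgeSet = ∅ := (Set.ncard_eq_zero (Set.toFinite _)).mp hn
      have hbot : F = ⊥ := edgeSet_eq_empty.mp hemp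
      subst hbot
      rw [zero_add]
      exact card_cc_bot
    · have hne : F.edgeSet.Nonempty := by
        rw [Set.nonempty_iff_ne_empty]
        intro hcon
        rw [hcon] at hn
        simp at hn
        omega
      obtain ⟨p, hp⟩ := hne
      induction p using Sym2.ind with
      | _ a b =>
        have hab : F.Adj a b := hp
        have hbr := bridge_of_acyclic hF hab
        have hDedges : (F.deleteEdges {s(a,b)}).edgeSet.ncard = n - 1 := by
          rw [edgeSet_deleteEdges, Set.ncard_diff_singleton_of_mem hp, hn]
        have hDacyc : (F.deleteEdges {s(a,b)}).IsAcyclic := acyclic_mono_s11 (deleteEdges_le _) hF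
        have := ih (n-1) (by omega) hDacyc hDedges
        rw [card_cc_deleteEdge hab hbr] at this
        omega

lemma card_cc_le_of_le [Fintype α] {G G' : SimpleGraph α} (h : G ≤ G') :
    Nat.card G'.ConnectedComponent ≤ Nat.card G.ConnectedComponent := by
  apply Nat.card_le_card_of_surjective
    (ConnectedComponent.map (Hom.ofLE h))
  intro C
  exact C.ind fun v => ⟨G.connectedComponentMk v, rfl⟩

lemma card_cc_eq_of_spanning [Fintype α] {G S : SimpleGraph α} (hle : S ≤ G)
    (h : ∀ a b, S.Reachable a b ↔ G.Reachable a b) :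
    Nat.card S.ConnectedComponent = Nat.card G.ConnectedComponent := by
  apply Nat.card_eq_of_bijective (ConnectedComponent.map (Hom.ofLE hle))
  constructor
  · intro C1 C2 hc
    revert hc
    refine ConnectedComponent.ind₂ ?_ C1 C2
    intro u v huv
    exact ConnectedComponent.eq.mpr ((h u v).mpr (ConnectedComponent.eq.mp huv))
  · intro C
    exact C.ind fun v => ⟨S.connectedComponentMk v, rfl⟩

lemma exists_spanning_forest [Fintype α] (H : SimpleGraph α) :
    ∃ T : SimpleGraph α, T ≤ H ∧ T.IsAcyclic ∧ ∀ a b, T.Reachable a b ↔ H.Reachable a b := by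
  classical
  generalize hn : H.edgeSet.ncard = n
  induction n using Nat.strong_induction_on generalizing H with
  | _ n ih =>
    by_cases hac : H.IsAcyclic
    · exact ⟨H, le_refl _, hac, fun _ _ => Iff.rfl⟩
    · rw [IsAcyclic] at hac
      push_neg at hac
      obtain ⟨v, c, hc⟩ := hac
      have hedge : ∃ x y, s(x,y) ∈ c.edges := by
        cases c with
        | nil => exact absurd hc (by simp [Walk.IsCycle])
        | cons h p => exact ⟨_, _, by rw [Walk.edges_cons]; exact List.mem_cons_self⟩
      obtain ⟨x, y, hxy⟩ := hedge
      have hkey : H.Adj x y ∧ (H \ fromEdgeSet {s(x,y)}).Reachable x y :=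
        (adj_and_reachable_delete_edges_iff_exists_cycle).mpr ⟨v, c, hc, hxy⟩
      have hDr : (H.deleteEdges {s(x,y)}).Reachable x y := hkey.2
      have hD : (H.deleteEdges {s(x,y)}).edgeSet.ncard = n - 1 := by
        rw [edgeSet_deleteEdges,
          Set.ncard_diff_singleton_of_mem ((H.mem_edgeSet).mpr hkey.1), hn]
      have hnpos : 0 < n := by
        rw [← hn]
        exact Set.ncard_pos (Set.toFinite _) |>.mpr ⟨s(x,y), hkey.1⟩
      obtain ⟨T, hT1, hT2, hT3⟩ := ih (n-1) (by omega) (H.deleteEdges {s(x,y)}) hD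
      refine ⟨T, hT1.trans (deleteEdges_le _), hT2, fun a b => ?_⟩
      rw [hT3]
      constructor
      · intro hr
        exact hr.mono (deleteEdges_le _)
      · intro hr
        rcases reachable_delete_edge (a := x) (b := y) hr with h1 | ⟨h2a, h2b⟩ | ⟨h3a, h3b⟩
        · exact h1
        · exact (h2a.trans hDr).trans h2b
        · exact (h3a.trans hDr.symm).trans h3b

end GraphHelpers

section WeightHelpers

open SimpleGraph

lemma interWt_mk (a b : Finset V) : interWt s(a,b) = (a ∩ b).card := rfl

lemma fweight_deleteEdge {F : SimpleGraph (Finset V)} {a b : Finset V}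
    (h : s(a,b) ∈ F.edgeSet) :
    fweight (F.deleteEdges {s(a,b)}) + interWt s(a,b) = fweight F := by
  unfold fweight
  have he : (Set.toFinite (F.deleteEdges {s(a,b)}).edgeSet).toFinset
      = (Set.toFinite F.edgeSet).toFinset.erase s(a,b) := by
    ext p
    simp [Set.Finite.mem_toFinset, edgeSet_deleteEdges, and_comm]
  rw [he, Finset.sum_erase_add]
  simpa [Set.Finite.mem_toFinset] using h

lemma fweight_sup_edge {F : SimpleGraph (Finset V)} {a b : Finset V} (hne : a ≠ b)
    (hnadj : ¬F.Adj a b) :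
    fweight (F ⊔ edge a b) = fweight F + interWt s(a,b) := by
  unfold fweight
  have he : (Set.toFinite (F ⊔ edge a b).edgeSet).toFinset
      = insert s(a,b) (Set.toFinite F.edgeSet).toFinset := by
    ext p
    simp [Set.Finite.mem_toFinset, edgeSet_sup, edge_edgeSet_of_ne hne, or_comm]
  rw [he, Finset.sum_insert (by simpa [Set.Finite.mem_toFinset] using hnadj), add_comm]

lemma fweight_mono {F F' : SimpleGraph (Finset V)} (h : F ≤ F') : fweight F ≤ fweight F' := by
  unfold fweight
  apply Finset.sum_le_sum_of_subset
  intro p hp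
  simp only [Set.Finite.mem_toFinset] at hp ⊢
  exact edgeSet_mono h hp

lemma swap_forest {H T : SimpleGraph (Finset V)} (hT : IsSpanningForest H T)
    {a b c d : Finset V} (hab : T.Adj a b) (hcd : H.Adj c d)
    (hc : (T.deleteEdges {s(a,b)}).Reachable c a)
    (hd : (T.deleteEdges {s(a,b)}).Reachable d b) :
    IsSpanningForest H ((T.deleteEdges {s(a,b)}) ⊔ edge c d) ∧
    fweight ((T.deleteEdges {s(a,b)}) ⊔ edge c d) + interWt s(a,b)
      = fweight T + interWt s(c,d) ∧
    ((T.deleteEdges {s(a,b)}) ⊔ edge c d).edgeSet = insert s(c,d) (T.edgeSet \ {s(a,b)}) := by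
  obtain ⟨hle, hacyc, hreach⟩ := hT
  have hbr : ¬(T.deleteEdges {s(a,b)}).Reachable a b := bridge_of_acyclic hacyc hab
  set D := T.deleteEdges {s(a,b)} with hDdef
  have hcdne : c ≠ d := hcd.ne
  have hncd : ¬D.Reachable c d := fun h => hbr ((hc.symm.trans h).trans hd)
  have hacyc' : (D ⊔ edge c d).IsAcyclic :=
    acyclic_sup_edge (acyclic_mono_s11 (deleteEdges_le _) hacyc) hcdne hncd
  have hle' : D ⊔ edge c d ≤ H := sup_le ((deleteEdges_le _).trans hle) (edge_le_of_adj hcd)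
  have hDle : ∀ {x y : Finset V}, D.Reachable x y → T.Reachable x y :=
    fun h => h.mono (deleteEdges_le _)
  have hTab : T.Reachable a b := hab.reachable
  have hfwd : ∀ u v, (D ⊔ edge c d).Reachable u v → T.Reachable u v := by
    intro u v h
    rcases reachable_sup_edge_iff.mp h with h1 | ⟨h2a, h2b⟩ | ⟨h3a, h3b⟩
    · exact hDle h1
    · exact ((((hDle h2a).trans (hDle hc)).trans hTab).trans (hDle hd).symm).trans (hDle h2b)
    · exact ((((hDle h3a).trans (hDle hd)).trans hTab.symm).trans (hDle hc).symm).trans (hDle h3b)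
  have hedgecd : (D ⊔ edge c d).Reachable a b := by
    have h1 : (D ⊔ edge c d).Adj c d := by
      rw [sup_adj, edge_adj]
      exact Or.inr ⟨Or.inl ⟨rfl, rfl⟩, hcdne⟩
    exact (((hc.symm.mono le_sup_left).trans h1.reachable)).trans (hd.mono le_sup_left)
  have hbwd : ∀ u v, T.Reachable u v → (D ⊔ edge c d).Reachable u v := by
    intro u v h
    have hl : ∀ {x y : Finset V}, D.Reachable x y → (D ⊔ edge c d).Reachable x y :=
      fun h => h.mono le_sup_left
    rcases reachable_delete_edge (a := a) (b := b) h with h1 | ⟨h2a, h2b⟩ | ⟨h3a, h3b⟩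
    · exact hl h1
    · exact ((hl h2a).trans hedgecd).trans (hl h2b)
    · exact ((hl h3a).trans hedgecd.symm).trans (hl h3b)
  have hES : (D ⊔ edge c d).edgeSet = insert s(c,d) (T.edgeSet \ {s(a,b)}) := by
    rw [edgeSet_sup_edge hcdne, hDdef, edgeSet_deleteEdges]
  refine ⟨⟨hle', hacyc', fun u v => ⟨fun h => (hreach u v).1 (hfwd u v h),
      fun h => hbwd u v ((hreach u v).2 h)⟩⟩, ?_, hES⟩
  have hnadj : ¬D.Adj c d := fun h => hncd h.reachable
  rw [fweight_sup_edge hcdne hnadj]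
  have := fweight_deleteEdge (F := T) (a := a) (b := b) hab
  rw [← hDdef] at this
  omega

end WeightHelpers

section MainArgument

open SimpleGraph

/-- The symmetric difference size between edge sets. -/
noncomputable def sdelta (S T : SimpleGraph (Finset V)) : ℕ :=
  ((S.edgeSet \ T.edgeSet) ∪ (T.edgeSet \ S.edgeSet)).ncard

lemma sdelta_eq (S T : SimpleGraph (Finset V)) :
    sdelta S T = (S.edgeSet \ T.edgeSet).ncard + (T.edgeSet \ S.edgeSet).ncard := by
  unfold sdelta
  rw [Set.ncard_union_eq _ (Set.toFinite _) (Set.toFinite _)]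
  rw [Set.disjoint_left]
  rintro x ⟨_, hx2⟩ ⟨hx3, _⟩
  exact hx2 hx3

lemma sdelta_swap {S T T2 : SimpleGraph (Finset V)} {p q : Sym2 (Finset V)}
    (hE : T2.edgeSet = insert q (T.edgeSet \ {p}))
    (hpT : p ∈ T.edgeSet) (hqT : q ∉ T.edgeSet)
    (hpS : p ∉ S.edgeSet) :
    (q ∈ S.edgeSet → sdelta S T2 + 2 = sdelta S T) ∧
    (q ∉ S.edgeSet → sdelta S T2 = sdelta S T) := by
  constructor
  · intro hqS
    have h1 : S.edgeSet \ T2.edgeSet = (S.edgeSet \ T.edgeSet) \ {q} := by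
      ext x
      have hxp : x = p → x ∈ S.edgeSet → False := fun h hx => hpS (h ▸ hx)
      rw [hE]
      simp only [Set.mem_diff, Set.mem_insert_iff, Set.mem_singleton_iff]
      tauto
    have h2 : T2.edgeSet \ S.edgeSet = (T.edgeSet \ S.edgeSet) \ {p} := by
      ext x
      have hxq : x = q → x ∈ S.edgeSet := fun h => h ▸ hqS
      rw [hE]
      simp only [Set.mem_diff, Set.mem_insert_iff, Set.mem_singleton_iff]
      tauto
    have hm1 : q ∈ S.edgeSet \ T.edgeSet := ⟨hqS, hqT⟩
    have hm2 : p ∈ T.edgeSet \ S.edgeSet := ⟨hpT, hpS⟩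
    have hc1 : 0 < (S.edgeSet \ T.edgeSet).ncard :=
      Set.ncard_pos (Set.toFinite _) |>.mpr ⟨q, hm1⟩
    have hc2 : 0 < (T.edgeSet \ S.edgeSet).ncard :=
      Set.ncard_pos (Set.toFinite _) |>.mpr ⟨p, hm2⟩
    rw [sdelta_eq, sdelta_eq, h1, h2,
      Set.ncard_diff_singleton_of_mem hm1,
      Set.ncard_diff_singleton_of_mem hm2]
    omega
  · intro hqS
    have h1 : S.edgeSet \ T2.edgeSet = S.edgeSet \ T.edgeSet := by
      ext x
      have hxp : x = p → x ∈ S.edgeSet → False := fun h hx => hpS (h ▸ hx)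
      have hxq : x = q → x ∈ S.edgeSet → False := fun h hx => hqS (h ▸ hx)
      rw [hE]
      simp only [Set.mem_diff, Set.mem_insert_iff, Set.mem_singleton_iff]
      tauto
    have h2 : T2.edgeSet \ S.edgeSet = insert q ((T.edgeSet \ S.edgeSet) \ {p}) := by
      ext x
      have hxq : x = q → x ∈ S.edgeSet → False := fun h hx => hqS (h ▸ hx)
      rw [hE]
      simp only [Set.mem_diff, Set.mem_insert_iff, Set.mem_singleton_iff]
      tauto
    have hm2 : p ∈ T.edgeSet \ S.edgeSet := ⟨hpT, hpS⟩
    have hc2 : 0 < (T.edgeSet \ S.edgeSet).ncard :=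
      Set.ncard_pos (Set.toFinite _) |>.mpr ⟨p, hm2⟩
    rw [sdelta_eq, sdelta_eq, h1, h2,
      Set.ncard_insert_of_notMem (fun h => hqT h.1.1) (Set.toFinite _),
      Set.ncard_diff_singleton_of_mem hm2]
    omega

lemma wg_mono {E E' : Finset (Finset V)} (h : E ⊆ E') : wg E ≤ wg E' := by
  intro x y hadj
  exact ⟨h hadj.1, h hadj.2.1, hadj.2.2⟩

lemma wg_adj_of_ne {E : Finset (Finset V)} {e x y : Finset V}
    (h : (wg (insert e E)).Adj x y) (hx : x ≠ e) (hy : y ≠ e) : (wg E).Adj x y :=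
  ⟨(Finset.mem_insert.mp h.1).resolve_left hx, (Finset.mem_insert.mp h.2.1).resolve_left hy,
    h.2.2⟩

lemma lemB {E : Finset (Finset V)} {e : Finset V} (he : e ∉ E)
    {S T : SimpleGraph (Finset V)} (hS : IsMaxSpanningForest (wg E) S)
    (hT : IsMaxSpanningForest (wg (insert e E)) T)
    (hmin : ∀ T', IsMaxSpanningForest (wg (insert e E)) T' → sdelta S T ≤ sdelta S T') :
    ∀ p ∈ T.edgeSet \ S.edgeSet, e ∈ p := by
  rintro p ⟨hpT, hpS⟩
  by_contra hep
  induction p using Sym2.ind with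
  | _ f g =>
  rw [Sym2.mem_iff] at hep
  push_neg at hep
  obtain ⟨hef, heg⟩ := hep
  have hfg : T.Adj f g := (T.mem_edgeSet).mp hpT
  have hG'fg : (wg (insert e E)).Adj f g := hT.1.1 hfg
  have hGfg : (wg E).Adj f g := wg_adj_of_ne hG'fg (Ne.symm hef) (Ne.symm heg)
  have hSnadj : ¬S.Adj f g := fun h => hpS ((S.mem_edgeSet).mpr h)
  have hbrT : ¬(T.deleteEdges {s(f,g)}).Reachable f g := bridge_of_acyclic hT.1.2.1 hfg
  have hSr : S.Reachable f g := (hS.1.2.2 f g).2 hGfg.reachable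
  obtain ⟨w0⟩ := hSr
  obtain ⟨x, y, hxyS, hPx, hPy, w1, w2, he1, he2⟩ :=
    cross_lemma (P := fun z => (T.deleteEdges {s(f,g)}).Reachable f z)
      w0.toPath.val w0.toPath.prop (Reachable.refl f) hbrT
  have hsxy_ne : s(x,y) ≠ s(f,g) := by
    intro hc
    rcases Sym2.eq_iff.mp hc with ⟨rfl, rfl⟩ | ⟨rfl, rfl⟩
    · exact hSnadj hxyS
    · exact hSnadj hxyS.symm
  have hxyT : ¬T.Adj x y := by
    intro hc
    have hD : (T.deleteEdges {s(f,g)}).Adj x y := by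
      rw [deleteEdges_adj]
      exact ⟨hc, by simpa using hsxy_ne⟩
    exact hPy (hPx.trans hD.reachable)
  have hG'xy : (wg (insert e E)).Adj x y := wg_mono (Finset.subset_insert _ _) (hS.1.1 hxyS)
  have hTfy : T.Reachable f y :=
    (hT.1.2.2 f y).2 (((hS.1.2.2 f y).1 (Reachable.trans ⟨w1⟩ hxyS.reachable)).mono
      (wg_mono (Finset.subset_insert _ _)))
  have hDgy : (T.deleteEdges {s(f,g)}).Reachable g y := by
    rcases reachable_delete_edge (a := f) (b := g) hTfy with h1 | ⟨h2a, h2b⟩ | ⟨h3a, h3b⟩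
    · exact absurd h1 hPy
    · exact h2b
    · exact absurd h3a hbrT
  obtain ⟨hsfT2, hwT2, hesT2⟩ := swap_forest hT.1 hfg hG'xy hPx.symm hDgy.symm
  have hwle : fweight ((T.deleteEdges {s(f,g)}) ⊔ edge x y) ≤ fweight T := hT.2 _ hsfT2
  have hDSfx : (S.deleteEdges {s(x,y)}).Reachable f x := reachable_of_walk_avoiding w1 he1
  have hDSgy : (S.deleteEdges {s(x,y)}).Reachable g y := (reachable_of_walk_avoiding w2 he2).symm
  obtain ⟨hsfS2, hwS2, _⟩ := swap_forest hS.1 hxyS hGfg hDSfx hDSgy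
  have hwle2 : fweight ((S.deleteEdges {s(x,y)}) ⊔ edge f g) ≤ fweight S := hS.2 _ hsfS2
  have hT2max : IsMaxSpanningForest (wg (insert e E)) ((T.deleteEdges {s(f,g)}) ⊔ edge x y) :=
    ⟨hsfT2, fun T' h' => by have := hT.2 T' h'; omega⟩
  have hsw := (sdelta_swap (S := S) hesT2 hpT (fun h => hxyT ((T.mem_edgeSet).mp h)) hpS).1
    ((S.mem_edgeSet).mpr hxyS)
  have hmin2 := hmin _ hT2max
  omega

lemma lemC1 {E : Finset (Finset V)} {e : Finset V} (he : e ∉ E)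
    {S T : SimpleGraph (Finset V)} (hS : IsMaxSpanningForest (wg E) S)
    (hT : IsMaxSpanningForest (wg (insert e E)) T)
    (hmin : ∀ T', IsMaxSpanningForest (wg (insert e E)) T' → sdelta S T ≤ sdelta S T')
    {f1 f2 : Finset V} (h1 : T.Adj e f1) (h2 : T.Adj e f2) (hne : f1 ≠ f2)
    (hlab : e ∩ f1 = e ∩ f2) : False := by
  have hSnoe : ∀ f : Finset V, ¬S.Adj e f := by
    intro f hc
    exact he (hS.1.1 hc).1
  have hG'1 : (wg (insert e E)).Adj e f1 := hT.1.1 h1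
  have hG'2 : (wg (insert e E)).Adj e f2 := hT.1.1 h2
  have hf1E : f1 ∈ E := (Finset.mem_insert.mp hG'1.2.1).resolve_left (Ne.symm hG'1.2.2.1)
  have hf2E : f2 ∈ E := (Finset.mem_insert.mp hG'2.2.1).resolve_left (Ne.symm hG'2.2.2.1)
  have hef1 : e ≠ f1 := hG'1.2.2.1
  have hef2 : e ≠ f2 := hG'2.2.2.1
  have hsne : s(e,f1) ≠ s(e,f2) := by
    intro hc
    rcases Sym2.eq_iff.mp hc with ⟨-, h⟩ | ⟨h, h'⟩
    · exact hne h
    · exact hef2 h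
  have hbr : ¬(T.deleteEdges {s(e,f2)}).Reachable e f2 := bridge_of_acyclic hT.1.2.1 h2
  have hDadj1 : (T.deleteEdges {s(e,f2)}).Adj e f1 := by
    rw [deleteEdges_adj]
    exact ⟨h1, by simpa using hsne⟩
  have hG'f12 : (wg (insert e E)).Adj f1 f2 := by
    refine ⟨Finset.mem_insert_of_mem hf1E, Finset.mem_insert_of_mem hf2E, hne, ?_⟩
    obtain ⟨v, hv⟩ := hG'1.2.2.2
    exact ⟨v, Finset.mem_inter.mpr ⟨(Finset.mem_inter.mp hv).2,
      (Finset.mem_inter.mp (hlab ▸ hv)).2⟩⟩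
  obtain ⟨hsfT2, hwT2, hesT2⟩ :=
    swap_forest hT.1 h2 hG'f12 hDadj1.symm.reachable (Reachable.refl f2)
  have hwle : fweight ((T.deleteEdges {s(e,f2)}) ⊔ edge f1 f2) ≤ fweight T := hT.2 _ hsfT2
  have hcard : interWt s(e,f2) ≤ interWt s(f1,f2) := by
    rw [interWt_mk, interWt_mk]
    apply Finset.card_le_card
    intro v hv
    rw [Finset.mem_inter] at hv ⊢
    refine ⟨?_, hv.2⟩
    have : v ∈ e ∩ f2 := Finset.mem_inter.mpr hv
    rw [← hlab] at this
    exact (Finset.mem_inter.mp this).2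
  have hT2max : IsMaxSpanningForest (wg (insert e E)) ((T.deleteEdges {s(e,f2)}) ⊔ edge f1 f2) :=
    ⟨hsfT2, fun T' h' => by have := hT.2 T' h'; omega⟩
  have hqT : s(f1,f2) ∉ T.edgeSet := by
    intro hc
    have hD : (T.deleteEdges {s(e,f2)}).Adj f1 f2 := by
      rw [deleteEdges_adj]
      refine ⟨(T.mem_edgeSet).mp hc, ?_⟩
      simp only [Set.mem_singleton_iff, Sym2.eq_iff]
      rintro (⟨h, -⟩ | ⟨h, h'⟩)
      · exact hef1 h.symm
      · exact hne h
    exact hbr (hDadj1.reachable.trans hD.reachable)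
  have hpS : s(e,f2) ∉ S.edgeSet := fun hc => hSnoe f2 ((S.mem_edgeSet).mp hc)
  have hsw := sdelta_swap (S := S) hesT2 ((T.mem_edgeSet).mpr h2) hqT hpS
  by_cases hqS : s(f1,f2) ∈ S.edgeSet
  · have := hsw.1 hqS
    have := hmin _ hT2max
    omega
  · have heq := hsw.2 hqS
    have hmin2 : ∀ T', IsMaxSpanningForest (wg (insert e E)) T' →
        sdelta S ((T.deleteEdges {s(e,f2)}) ⊔ edge f1 f2) ≤ sdelta S T' := by
      intro T' h'
      have := hmin T' h'
      omega
    have hmem : s(f1,f2) ∈ ((T.deleteEdges {s(e,f2)}) ⊔ edge f1 f2).edgeSet \ S.edgeSet := by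
      rw [hesT2]
      exact ⟨Set.mem_insert _ _, hqS⟩
    have := lemB he hS hT2max hmin2 _ hmem
    rw [Sym2.mem_iff] at this
    rcases this with h | h
    · exact hef1 h
    · exact hef2 h

/-- The subgraph of `S` consisting of edges whose intersection label is exactly `A`. -/
def labelGraph (S : SimpleGraph (Finset V)) (A : Finset V) : SimpleGraph (Finset V) where
  Adj u v := S.Adj u v ∧ u ∩ v = A
  symm := by
    constructor
    intro u v h
    exact ⟨h.1.symm, by rw [Finset.inter_comm]; exact h.2⟩
  loopless := ⟨fun u h => S.loopless.irrefl u h.1⟩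

/-- The tie-breaking potential. -/
noncomputable def Phi (S T : SimpleGraph (Finset V)) (e : Finset V) : ℕ :=
  ∑ g ∈ (Set.toFinite {g | T.Adj e g}).toFinset, leafDist (labelGraph S (e ∩ g)) g

lemma lemE4 {E : Finset (Finset V)} {e : Finset V} (he : e ∉ E)
    {S T : SimpleGraph (Finset V)} (hS : IsMaxSpanningForest (wg E) S)
    (hstar : InvariantStar E S)
    (hT : IsMaxSpanningForest (wg (insert e E)) T)
    (hmin : ∀ T', IsMaxSpanningForest (wg (insert e E)) T' → sdelta S T ≤ sdelta S T')
    (hphi : ∀ T', IsMaxSpanningForest (wg (insert e E)) T' → sdelta S T' = sdelta S T →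
      Phi S T e ≤ Phi S T' e)
    {g f1 f2 : Finset V} (hTeg : T.Adj e g) (hf1 : T.Adj g f1) (hf2 : T.Adj g f2)
    (hne : f1 ≠ f2) (hf1e : f1 ≠ e) (hf2e : f2 ≠ e)
    (hlab1 : g ∩ f1 = g ∩ e) (hlab2 : g ∩ f2 = g ∩ e) : False := by
  set A := g ∩ e with hA
  have hSnoe : ∀ f : Finset V, ¬S.Adj e f := by
    intro f hc
    exact he (hS.1.1 hc).1
  have hG'eg : (wg (insert e E)).Adj e g := hT.1.1 hTeg
  have heg : e ≠ g := hG'eg.2.2.1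
  have hgE : g ∈ E := (Finset.mem_insert.mp hG'eg.2.1).resolve_left (Ne.symm heg)
  have hAne : A.Nonempty := by
    rw [hA, Finset.inter_comm]
    exact hG'eg.2.2.2
  have hSadj : ∀ f', T.Adj g f' → f' ≠ e → S.Adj g f' := by
    intro f' hTf' hf'e
    by_contra hc
    have hmem : s(g, f') ∈ T.edgeSet \ S.edgeSet :=
      ⟨(T.mem_edgeSet).mpr hTf', fun hh => hc ((S.mem_edgeSet).mp hh)⟩
    have := lemB he hS hT hmin _ hmem
    rw [Sym2.mem_iff] at this
    rcases this with h | h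
    · exact heg h
    · exact hf'e h.symm
  have hSgf1 : S.Adj g f1 := hSadj f1 hf1 hf1e
  have hSgf2 : S.Adj g f2 := hSadj f2 hf2 hf2e
  have hFAle : labelGraph S A ≤ S := fun _ _ h => h.1
  have hFAacyc : (labelGraph S A).IsAcyclic := acyclic_mono_s11 hFAle hS.1.2.1
  have hgNotLeafy : ¬IsLeafy (labelGraph S A) g :=
    fun hl => hne (hl f1 f2 ⟨hSgf1, hlab1⟩ ⟨hSgf2, hlab2⟩)
  obtain ⟨f, hFAgf, hphif⟩ := leafDist_step hFAacyc hgNotLeafy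
  have hSgf : S.Adj g f := hFAgf.1
  have hgf_lab : g ∩ f = A := hFAgf.2
  have hfmem : f = f1 ∨ f = f2 := by
    by_contra hc
    push_neg at hc
    have hsub : ({f1, f2, f} : Set (Finset V)) ⊆ {h | S.Adj g h ∧ g ∩ h = A} := by
      rintro x (rfl | rfl | rfl)
      · exact ⟨hSgf1, hlab1⟩
      · exact ⟨hSgf2, hlab2⟩
      · exact ⟨hSgf, hgf_lab⟩
    have hcard3 : ({f1, f2, f} : Set (Finset V)).ncard = 3 := by
      rw [Set.ncard_insert_of_notMem (by
          simp only [Set.mem_insert_iff, Set.mem_singleton_iff]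
          push_neg
          exact ⟨hne, fun h => hc.1 h.symm⟩) (Set.toFinite _),
        Set.ncard_insert_of_notMem (by
          simp only [Set.mem_singleton_iff]
          exact fun h => hc.2 h.symm) (Set.toFinite _),
        Set.ncard_singleton]
    have hb := hstar g hgE A hAne (hA ▸ Finset.inter_subset_left)
    have := Set.ncard_le_ncard hsub (Set.toFinite _)
    omega
  have hTgf : T.Adj g f := by
    rcases hfmem with rfl | rfl
    · exact hf1
    · exact hf2
  have hfe : f ≠ e := by
    rcases hfmem with rfl | rfl
    · exact hf1e
    · exact hf2e
  have hfg : f ≠ g := fun h => S.loopless.irrefl g (h ▸ hSgf)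
  have hfE : f ∈ E := (hS.1.1 hSgf).2.1
  have hbr : ¬(T.deleteEdges {s(e,g)}).Reachable e g := bridge_of_acyclic hT.1.2.1 hTeg
  have hDgf : (T.deleteEdges {s(e,g)}).Adj g f := by
    rw [deleteEdges_adj]
    refine ⟨hTgf, ?_⟩
    simp only [Set.mem_singleton_iff, Sym2.eq_iff]
    rintro (⟨h, -⟩ | ⟨-, h⟩)
    · exact heg h.symm
    · exact hfe h
  have hAsube : A ⊆ e := hA ▸ Finset.inter_subset_right
  have hAsubf : A ⊆ f := hgf_lab ▸ Finset.inter_subset_right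
  have hAsubef : A ⊆ e ∩ f := Finset.subset_inter hAsube hAsubf
  have hcd : (wg (insert e E)).Adj e f :=
    ⟨Finset.mem_insert_self _ _, Finset.mem_insert_of_mem hfE, Ne.symm hfe,
      hAne.mono hAsubef⟩
  obtain ⟨hsfT2, hwT2, hesT2⟩ := swap_forest hT.1 hTeg hcd (Reachable.refl e) hDgf.symm.reachable
  have hwle : fweight ((T.deleteEdges {s(e,g)}) ⊔ edge e f) ≤ fweight T := hT.2 _ hsfT2
  have hweg : interWt s(e,g) = A.card := by
    rw [interWt_mk, Finset.inter_comm, ← hA]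
  have hcardle : interWt s(e,g) ≤ interWt s(e,f) := by
    rw [hweg, interWt_mk]
    exact Finset.card_le_card hAsubef
  have hT2max : IsMaxSpanningForest (wg (insert e E)) ((T.deleteEdges {s(e,g)}) ⊔ edge e f) :=
    ⟨hsfT2, fun T' h' => by have := hT.2 T' h'; omega⟩
  have hlabf : e ∩ f = A := by
    have hle2 : interWt s(e,f) ≤ interWt s(e,g) := by omega
    rw [hweg, interWt_mk] at hle2
    exact (Finset.eq_of_subset_of_card_le hAsubef hle2).symm
  have hqT : s(e,f) ∉ T.edgeSet := by
    intro hcmem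
    have hD : (T.deleteEdges {s(e,g)}).Adj e f := by
      rw [deleteEdges_adj]
      refine ⟨(T.mem_edgeSet).mp hcmem, ?_⟩
      simp only [Set.mem_singleton_iff, Sym2.eq_iff]
      rintro (⟨-, h⟩ | ⟨h, -⟩)
      · exact hfg h
      · exact heg h
    exact hbr (hD.reachable.trans hDgf.symm.reachable)
  have hpS : s(e,g) ∉ S.edgeSet := fun hcmem => hSnoe g ((S.mem_edgeSet).mp hcmem)
  have hqS : s(e,f) ∉ S.edgeSet := fun hcmem => hSnoe f ((S.mem_edgeSet).mp hcmem)
  have hdel := (sdelta_swap (S := S) hesT2 ((T.mem_edgeSet).mpr hTeg) hqT hpS).2 hqS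
  have hphi2 := hphi _ hT2max hdel
  -- compute the potential change
  have hTef : ¬T.Adj e f := fun hcadj => hqT ((T.mem_edgeSet).mpr hcadj)
  have hsets : (Set.toFinite {h | ((T.deleteEdges {s(e,g)}) ⊔ edge e f).Adj e h}).toFinset
      = insert f (((Set.toFinite {h | T.Adj e h}).toFinset).erase g) := by
    ext h
    rw [Set.Finite.mem_toFinset, Set.mem_setOf_eq, Finset.mem_insert, Finset.mem_erase,
      Set.Finite.mem_toFinset, Set.mem_setOf_eq, sup_adj, deleteEdges_adj, edge_adj]
    constructor
    · rintro (⟨hTeh, hne2⟩ | ⟨(⟨-, rfl⟩ | ⟨h1, -⟩), -⟩)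
      · refine Or.inr ⟨fun hcon => hne2 ?_, hTeh⟩
        rw [hcon]
        exact Set.mem_singleton _
      · exact Or.inl rfl
      · exact absurd h1.symm hfe
    · rintro (rfl | ⟨hhg, hTeh⟩)
      · exact Or.inr ⟨Or.inl ⟨rfl, rfl⟩, Ne.symm hfe⟩
      · refine Or.inl ⟨hTeh, fun hcon => ?_⟩
        rcases Sym2.eq_iff.mp (Set.mem_singleton_iff.mp hcon) with ⟨-, h2⟩ | ⟨h2, -⟩
        · exact hhg h2
        · exact heg h2
  have hfnotin : f ∉ ((Set.toFinite {h | T.Adj e h}).toFinset).erase g := by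
    intro hcon
    rw [Finset.mem_erase, Set.Finite.mem_toFinset] at hcon
    exact hTef hcon.2
  have hgin : g ∈ (Set.toFinite {h | T.Adj e h}).toFinset := by
    rw [Set.Finite.mem_toFinset]
    exact hTeg
  have hPhiT2 : Phi S ((T.deleteEdges {s(e,g)}) ⊔ edge e f) e
      = leafDist (labelGraph S A) f
        + ∑ h ∈ ((Set.toFinite {h | T.Adj e h}).toFinset).erase g,
            leafDist (labelGraph S (e ∩ h)) h := by
    rw [Phi, hsets, Finset.sum_insert hfnotin, hlabf]
  have hPhiT : Phi S T e
      = leafDist (labelGraph S A) g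
        + ∑ h ∈ ((Set.toFinite {h | T.Adj e h}).toFinset).erase g,
            leafDist (labelGraph S (e ∩ h)) h := by
    rw [Phi, ← Finset.add_sum_erase _ _ hgin]
    congr 2
    rw [Finset.inter_comm, ← hA]
  rw [hPhiT2, hPhiT] at hphi2
  omega

lemma edge_count_le {G G' S T : SimpleGraph (Finset V)} (hGG' : G ≤ G')
    (hS : IsSpanningForest G S) (hT : IsSpanningForest G' T) :
    S.edgeSet.ncard ≤ T.edgeSet.ncard := by
  have h1 := forest_formula hS.2.1
  have h2 := forest_formula hT.2.1
  have h3 : Nat.card S.ConnectedComponent = Nat.card G.ConnectedComponent :=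
    card_cc_eq_of_spanning hS.1 hS.2.2
  have h4 : Nat.card T.ConnectedComponent = Nat.card G'.ConnectedComponent :=
    card_cc_eq_of_spanning hT.1 hT.2.2
  have h5 := card_cc_le_of_le hGG'
  omega

end MainArgument
/-- **Insertion step of Theorem 3.2**: after inserting a hyperedge `e`, a
maximum-weight spanning forest satisfying Invariant (★) can be turned into one for
the new hypergraph, adding only edges incident to `e` and changing at most
`2 * (2 ^ |e| - 1)` edges. -/
theorem insertion_step (E : Finset (Finset V)) (e : Finset V) (he : e ∉ E)
    (S : SimpleGraph (Finset V)) (hS : IsMaxSpanningForest (wg E) S)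
    (hstar : InvariantStar E S) :
    ∃ S', IsMaxSpanningForest (wg (insert e E)) S' ∧ InvariantStar (insert e E) S' ∧
      (∀ p ∈ S'.edgeSet \ S.edgeSet, e ∈ p) ∧
      ((S.edgeSet \ S'.edgeSet) ∪ (S'.edgeSet \ S.edgeSet)).ncard ≤ 2 * (2 ^ e.card - 1) := by
  classical
  obtain ⟨T0, hT0le, hT0ac, hT0r⟩ := exists_spanning_forest (wg (insert e E))
  have hsf0 : IsSpanningForest (wg (insert e E)) T0 := ⟨hT0le, hT0ac, hT0r⟩
  have hWne : (fweight '' {T | IsSpanningForest (wg (insert e E)) T}).Nonempty :=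
    ⟨_, T0, hsf0, rfl⟩
  have hWbdd : BddAbove (fweight '' {T | IsSpanningForest (wg (insert e E)) T}) := by
    refine ⟨fweight (wg (insert e E)), ?_⟩
    rintro w ⟨T, hT, rfl⟩
    exact fweight_mono hT.1
  obtain ⟨T1, hT1sf, hT1w⟩ := Nat.sSup_mem hWne hWbdd
  have hT1max : IsMaxSpanningForest (wg (insert e E)) T1 := by
    refine ⟨hT1sf, fun T' h' => ?_⟩
    have hmem : fweight T' ∈ fweight '' {T | IsSpanningForest (wg (insert e E)) T} :=
      ⟨T', h', rfl⟩
    have := le_csSup hWbdd hmem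
    omega
  have hDne : ((sdelta S) '' {T | IsMaxSpanningForest (wg (insert e E)) T}).Nonempty :=
    ⟨_, T1, hT1max, rfl⟩
  obtain ⟨T2, hT2max, hT2d⟩ := Nat.sInf_mem hDne
  have hT2min : ∀ T', IsMaxSpanningForest (wg (insert e E)) T' → sdelta S T2 ≤ sdelta S T' := by
    intro T' h'
    have hmem : sdelta S T' ∈ (sdelta S) '' {T | IsMaxSpanningForest (wg (insert e E)) T} :=
      ⟨T', h', rfl⟩
    have := Nat.sInf_le hmem
    omega
  have hPne : ((fun T => Phi S T e) ''
      {T | IsMaxSpanningForest (wg (insert e E)) T ∧ sdelta S T = sdelta S T2}).Nonempty :=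
    ⟨_, T2, ⟨hT2max, rfl⟩, rfl⟩
  obtain ⟨T3, ⟨hT3max, hT3d⟩, hT3p⟩ := Nat.sInf_mem hPne
  have hT3min : ∀ T', IsMaxSpanningForest (wg (insert e E)) T' → sdelta S T3 ≤ sdelta S T' := by
    intro T' h'
    rw [hT3d]
    exact hT2min T' h'
  have hT3phi : ∀ T', IsMaxSpanningForest (wg (insert e E)) T' → sdelta S T' = sdelta S T3 →
      Phi S T3 e ≤ Phi S T' e := by
    intro T' h' hd
    have hmem : Phi S T' e ∈ (fun T => Phi S T e) ''
        {T | IsMaxSpanningForest (wg (insert e E)) T ∧ sdelta S T = sdelta S T2} :=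
      ⟨T', ⟨h', by rw [hd, hT3d]⟩, rfl⟩
    exact le_trans (le_of_eq hT3p) (Nat.sInf_le hmem)
  have hinc : ∀ p ∈ T3.edgeSet \ S.edgeSet, e ∈ p := lemB he hS hT3max hT3min
  refine ⟨T3, hT3max, ?_, hinc, ?_⟩
  · -- Invariant (★)
    intro x hx A hAne hAx
    by_cases hxe : x = e
    · subst hxe
      have hss : {f | T3.Adj x f ∧ x ∩ f = A}.Subsingleton := by
        intro a ha b hb
        by_contra hab
        exact lemC1 he hS hT3max hT3min ha.1 hb.1 hab (ha.2.trans hb.2.symm)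
      rcases Set.eq_empty_or_nonempty {f | T3.Adj x f ∧ x ∩ f = A} with hemp | ⟨a, hha⟩
      · rw [hemp]
        simp
      · have hsub2 : {f | T3.Adj x f ∧ x ∩ f = A} ⊆ {a} := fun b hb => hss hb hha
        have := Set.ncard_le_ncard hsub2 (Set.toFinite _)
        rw [Set.ncard_singleton] at this
        omega
    · have hxE : x ∈ E := (Finset.mem_insert.mp hx).resolve_left hxe
      have hold : ∀ f', T3.Adj x f' → f' ≠ e → S.Adj x f' := by
        intro f' hadj hne'
        by_contra hc
        have hmem : s(x, f') ∈ T3.edgeSet \ S.edgeSet :=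
          ⟨(T3.mem_edgeSet).mpr hadj, fun hh => hc ((S.mem_edgeSet).mp hh)⟩
        have := hinc _ hmem
        rw [Sym2.mem_iff] at this
        rcases this with h | h
        · exact hxe h.symm
        · exact hne' h.symm
      by_cases hxeadj : T3.Adj x e ∧ x ∩ e = A
      · have hss : {f | T3.Adj x f ∧ x ∩ f = A ∧ f ≠ e}.Subsingleton := by
          intro a ha b hb
          by_contra hab
          exact lemE4 he hS hstar hT3max hT3min hT3phi hxeadj.1.symm ha.1 hb.1 hab
            ha.2.2 hb.2.2 (ha.2.1.trans hxeadj.2.symm) (hb.2.1.trans hxeadj.2.symm)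
        have hsub : {f | T3.Adj x f ∧ x ∩ f = A}
            ⊆ insert e {f | T3.Adj x f ∧ x ∩ f = A ∧ f ≠ e} := by
          rintro b ⟨hb1, hb2⟩
          by_cases hbe : b = e
          · exact Or.inl hbe
          · exact Or.inr ⟨hb1, hb2, hbe⟩
        have h1 : {f | T3.Adj x f ∧ x ∩ f = A ∧ f ≠ e}.ncard ≤ 1 := by
          rcases Set.eq_empty_or_nonempty {f | T3.Adj x f ∧ x ∩ f = A ∧ f ≠ e} with hemp | ⟨a, hha⟩
          · rw [hemp]
            simp
          · have hsub2 : {f | T3.Adj x f ∧ x ∩ f = A ∧ f ≠ e} ⊆ {a} := fun b hb => hss hb hha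
            have := Set.ncard_le_ncard hsub2 (Set.toFinite _)
            rw [Set.ncard_singleton] at this
            omega
        have h2 := Set.ncard_le_ncard hsub (Set.toFinite _)
        have h3 := Set.ncard_insert_le e {f | T3.Adj x f ∧ x ∩ f = A ∧ f ≠ e}
        omega
      · have hsub : {f | T3.Adj x f ∧ x ∩ f = A} ⊆ {f | S.Adj x f ∧ x ∩ f = A} := by
          rintro b ⟨hb1, hb2⟩
          by_cases hbe : b = e
          · subst hbe
            exact absurd ⟨hb1, hb2⟩ hxeadj
          · exact ⟨hold b hb1 hbe, hb2⟩
        exact le_trans (Set.ncard_le_ncard hsub (Set.toFinite _)) (hstar x hxE A hAne hAx)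
  · -- the cardinality bound
    have hcount : S.edgeSet.ncard ≤ T3.edgeSet.ncard :=
      edge_count_le (wg_mono (Finset.subset_insert _ _)) hS.1 hT3max.1
    have hi1 := Set.ncard_inter_add_ncard_diff_eq_ncard S.edgeSet T3.edgeSet (Set.toFinite _)
    have hi2 := Set.ncard_inter_add_ncard_diff_eq_ncard T3.edgeSet S.edgeSet (Set.toFinite _)
    rw [Set.inter_comm] at hi2
    have himg : T3.edgeSet \ S.edgeSet ⊆ (fun f => s(e, f)) '' {f | T3.Adj e f} := by
      intro p hp
      have hep := hinc p hp
      induction p using Sym2.ind with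
      | _ x y =>
        rw [Sym2.mem_iff] at hep
        rcases hep with rfl | rfl
        · exact ⟨y, (T3.mem_edgeSet).mp hp.1, rfl⟩
        · exact ⟨x, ((T3.mem_edgeSet).mp hp.1).symm, Sym2.eq_swap⟩
    have hinj : Set.InjOn (fun f => e ∩ f) {f | T3.Adj e f} := by
      intro a ha b hb hab
      by_contra hne2
      exact lemC1 he hS hT3max hT3min ha hb hne2 hab
    have hcard1 : ((fun f => s(e, f)) '' {f | T3.Adj e f}).ncard ≤ {f | T3.Adj e f}.ncard :=
      Set.ncard_image_le (Set.toFinite _)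
    have hcard2 : {f | T3.Adj e f}.ncard
        ≤ ((e.powerset.erase ∅ : Finset (Finset V)) : Set (Finset V)).ncard := by
      refine Set.ncard_le_ncard_of_injOn (fun f => e ∩ f) ?_ hinj (Set.toFinite _)
      intro f hf
      have hG'ef : (wg (insert e E)).Adj e f := hT3max.1.1 hf
      simp only [Finset.coe_erase, Set.mem_diff, Finset.mem_coe, Finset.mem_powerset,
        Set.mem_singleton_iff]
      exact ⟨Finset.inter_subset_left, by
        intro hcon
        exact Finset.Nonempty.ne_empty hG'ef.2.2.2 hcon⟩
    have hpow : ((e.powerset.erase ∅ : Finset (Finset V)) : Set (Finset V)).ncard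
        = 2 ^ e.card - 1 := by
      rw [Set.ncard_coe_finset, Finset.card_erase_of_mem (Finset.empty_mem_powerset e),
        Finset.card_powerset]
    have hmain := Set.ncard_le_ncard himg (Set.toFinite _)
    have hone : 1 ≤ 2 ^ e.card := Nat.one_le_two_pow
    have hfinal : sdelta S T3 ≤ 2 * (2 ^ e.card - 1) := by
      rw [sdelta_eq]
      omega
    rw [sdelta] at hfinal
    exact hfinal
end
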